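/- arXiv:1703.07230 — 6 statements merged into one kernel-verified Lean document; each statement's English description precedes it below -/
import Mathlib

section
/- Fix a finite frequency set I ⊂ ℤ^d with |I| = T, a frequency k ∈ I, and a prime number M such that the map h ↦ h mod M is injective on I. Then the number of vectors z ∈ {0,…,M−1}^d ∩ ℤ^d for which there exists h ∈ I∖{k} with k·z ≡ h·z (mod M) is at most (T−1)·M^{d−1}; equivalently, if z is uniformly distributed on {0,…,M−1}^d ∩ ℤ^d, then the probability that k aliases to at least one other frequency within I with respect to Λ(z,M) is at most (T−1)/M. -/
open scoped BigOperators

open Finset in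
private lemma statement4_key {M d : ℕ} [Fact M.Prime] (c : Fin d → ZMod M) (hc : c ≠ 0) :
    (Finset.univ.filter (fun w : Fin d → ZMod M => ∑ i, c i * w i = 0)).card
      = M ^ (d - 1) := by
  classical
  have hM := Fact.out (p := M.Prime)
  obtain ⟨i₀, hi₀⟩ : ∃ i, c i ≠ 0 := by
    by_contra h; push_neg at h; exact hc (funext h)
  have hd : 0 < d := i₀.pos
  let f : (Fin d → ZMod M) →+ ZMod M :=
    { toFun := fun w => ∑ i, c i * w i,
      map_zero' := by simp,
      map_add' := by intro a b; simp [mul_add, Finset.sum_add_distrib] }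
  have hsurj : Function.Surjective f := by
    intro y
    refine ⟨(Pi.single i₀ ((c i₀)⁻¹ * y) : Fin d → ZMod M), ?_⟩
    have : ∑ i, c i * (Pi.single i₀ ((c i₀)⁻¹ * y) : Fin d → ZMod M) i = y := by
      rw [Finset.sum_eq_single i₀]
      · simp [← mul_assoc, mul_inv_cancel₀ hi₀]
      · intro b _ hb; simp [Pi.single_eq_of_ne hb]
      · simp
    exact this
  have hcard : Nat.card (Fin d → ZMod M) = Nat.card ((Fin d → ZMod M) ⧸ f.ker) * Nat.card f.ker :=
    AddSubgroup.card_eq_card_quotient_mul_card_addSubgroup f.ker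
  have hq : Nat.card ((Fin d → ZMod M) ⧸ f.ker) = M := by
    rw [Nat.card_congr (QuotientAddGroup.quotientKerEquivOfSurjective f hsurj).toEquiv]
    simp [Nat.card_eq_fintype_card]
  have hdom : Nat.card (Fin d → ZMod M) = M ^ d := by
    simp [Nat.card_eq_fintype_card]
  have hker : Nat.card f.ker = M ^ (d - 1) := by
    have h1 : M ^ d = M * Nat.card f.ker := by rw [← hdom, hcard, hq]
    have h2 : M ^ d = M * M ^ (d - 1) := by
      rw [← pow_succ']; congr 1; omega
    exact Nat.eq_of_mul_eq_mul_left hM.pos (h1.symm.trans h2)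
  calc (Finset.univ.filter (fun w : Fin d → ZMod M => ∑ i, c i * w i = 0)).card
      = Fintype.card {w : Fin d → ZMod M // ∑ i, c i * w i = 0} :=
        (Fintype.card_subtype _).symm
    _ = Nat.card {w : Fin d → ZMod M // ∑ i, c i * w i = 0} :=
        (Nat.card_eq_fintype_card).symm
    _ = Nat.card f.ker := Nat.card_congr (Equiv.subtypeEquivRight (by
          intro w; simp only [AddMonoidHom.mem_ker]; exact Iff.rfl))
    _ = M ^ (d - 1) := hker

/-- fix a finite frequency set `I ⊂ ℤ^d` with `|I| = T`, a frequency `k ∈ I`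
and a prime `M` such that `h ↦ h mod M` is injective on `I`. Then the number of vectors
`z ∈ {0,…,M-1}^d` for which `k` aliases to at least one other frequency of `I` modulo `M`
(i.e. `∃ h ∈ I∖{k}` with `k·z ≡ h·z (mod M)`) is at most `(T-1)·M^{d-1}`; equivalently,
for uniformly random `z` the aliasing probability is at most `(T-1)/M`. -/
theorem statement4 {d : ℕ} (I : Finset (Fin d → ℤ)) (T : ℕ) (hT : I.card = T)
    (k : Fin d → ℤ) (hk : k ∈ I) (M : ℕ) (hM : M.Prime)
    (hinj : Set.InjOn (fun h : Fin d → ℤ => fun i => h i % (M : ℤ)) (↑I : Set (Fin d → ℤ))) :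
    Nat.card {z : Fin d → Fin M // ∃ h ∈ I, h ≠ k ∧
        (∑ i, k i * ((z i : ℕ) : ℤ)) % (M : ℤ) = (∑ i, h i * ((z i : ℕ) : ℤ)) % (M : ℤ)}
      ≤ (T - 1) * M ^ (d - 1) := by
  classical
  haveI : Fact M.Prime := ⟨hM⟩
  haveI : NeZero M := ⟨hM.pos.ne'⟩
  -- coefficient vector for each h
  set c : (Fin d → ℤ) → Fin d → ZMod M := fun h i => ((k i - h i : ℤ) : ZMod M) with hc
  have hc0 : ∀ h ∈ I.erase k, c h ≠ 0 := by
    intro h hh habs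
    have hhI : h ∈ I := Finset.mem_of_mem_erase hh
    have hne : h ≠ k := Finset.ne_of_mem_erase hh
    have heq : ∀ i, h i % (M : ℤ) = k i % (M : ℤ) := by
      intro i
      have h0 : ((k i - h i : ℤ) : ZMod M) = 0 := congrFun habs i
      have hdvd : (M : ℤ) ∣ (k i - h i) := (ZMod.intCast_zmod_eq_zero_iff_dvd _ _).mp h0
      exact (Int.modEq_iff_dvd.mpr hdvd)
    exact hne (hinj hhI hk (funext heq))
  -- the equiv between Fin M and ZMod M
  let e : Fin M ≃ ZMod M :=
    { toFun := fun a => ((a : ℕ) : ZMod M),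
      invFun := fun w => ⟨w.val, ZMod.val_lt w⟩,
      left_inv := by intro a; ext; exact ZMod.val_natCast_of_lt a.isLt,
      right_inv := by intro w; exact ZMod.natCast_rightInverse w }
  let E : (Fin d → Fin M) ≃ (Fin d → ZMod M) := Equiv.piCongrRight (fun _ => e)
  rw [Nat.card_eq_fintype_card, Fintype.card_subtype]
  -- subset of a union over h ∈ I.erase k
  have hsub : (Finset.univ.filter (fun z : Fin d → Fin M => ∃ h ∈ I, h ≠ k ∧
        (∑ i, k i * ((z i : ℕ) : ℤ)) % (M : ℤ) = (∑ i, h i * ((z i : ℕ) : ℤ)) % (M : ℤ)))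
      ⊆ (I.erase k).biUnion (fun h => Finset.univ.filter
          (fun z : Fin d → Fin M => ∑ i, c h i * ((z i : ℕ) : ZMod M) = 0)) := by
    intro z hz
    simp only [Finset.mem_filter, Finset.mem_univ, true_and] at hz
    obtain ⟨h, hhI, hne, hmod⟩ := hz
    refine Finset.mem_biUnion.mpr ⟨h, Finset.mem_erase.mpr ⟨hne, hhI⟩, ?_⟩
    simp only [Finset.mem_filter, Finset.mem_univ, true_and]
    have hcast : ((∑ i, k i * ((z i : ℕ) : ℤ) : ℤ) : ZMod M)
        = ((∑ i, h i * ((z i : ℕ) : ℤ) : ℤ) : ZMod M) :=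
      (ZMod.intCast_eq_intCast_iff _ _ _).mpr hmod
    push_cast at hcast
    simp only [hc]
    push_cast
    rw [Finset.sum_congr rfl (fun i _ => sub_mul ((k i : ZMod M)) _ _),
      Finset.sum_sub_distrib, sub_eq_zero]
    exact hcast
  have hcount : ∀ h ∈ I.erase k,
      (Finset.univ.filter
        (fun z : Fin d → Fin M => ∑ i, c h i * ((z i : ℕ) : ZMod M) = 0)).card
      = M ^ (d - 1) := by
    intro h hh
    rw [Finset.card_equiv E (t := Finset.univ.filter
        (fun w : Fin d → ZMod M => ∑ i, c h i * w i = 0)) (by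
      intro z
      simp only [Finset.mem_filter, Finset.mem_univ, true_and, E, e,
        Equiv.piCongrRight_apply, Pi.map_apply, Equiv.coe_fn_mk])]
    exact statement4_key (c h) (hc0 h hh)
  calc (Finset.univ.filter (fun z : Fin d → Fin M => ∃ h ∈ I, h ≠ k ∧
        (∑ i, k i * ((z i : ℕ) : ℤ)) % (M : ℤ) = (∑ i, h i * ((z i : ℕ) : ℤ)) % (M : ℤ))).card
      ≤ ((I.erase k).biUnion (fun h => Finset.univ.filter
          (fun z : Fin d → Fin M => ∑ i, c h i * ((z i : ℕ) : ZMod M) = 0))).card :=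
        Finset.card_le_card hsub
    _ ≤ ∑ h ∈ I.erase k, (Finset.univ.filter
          (fun z : Fin d → Fin M => ∑ i, c h i * ((z i : ℕ) : ZMod M) = 0)).card :=
        Finset.card_biUnion_le
    _ = ∑ h ∈ I.erase k, M ^ (d - 1) := Finset.sum_congr rfl hcount
    _ = (I.erase k).card * M ^ (d - 1) := by rw [Finset.sum_const, smul_eq_mul]
    _ = (T - 1) * M ^ (d - 1) := by rw [Finset.card_erase_of_mem hk, hT]
end

section
/- Let I ⊂ ℤ^d be a finite frequency set with |I| = T ≥ 2, fix k ∈ I, let δ ∈ (0,1) and c > 1 be real numbers, let λ ≥ c(T−1), and let s be an integer with s ≥ (c/(c−1))² (ln T − ln δ)/2. Let M_1,…,M_s be prime numbers (not necessarily distinct) with M_ℓ > λ and such that the map h ↦ h mod M_ℓ is injective on I for each ℓ. If z_1,…,z_s are independent random vectors with z_ℓ uniformly distributed on {0,…,M_ℓ−1}^d ∩ ℤ^d, then the probability that for every ℓ ∈ {1,…,s} there exists h ∈ I∖{k} with k·z_ℓ ≡ h·z_ℓ (mod M_ℓ) is at most δ/T. -/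
open scoped BigOperators

lemma count_fiber {d M : ℕ} (hM : M.Prime) (a : Fin d → ZMod M) (i0 : Fin d) (ha : a i0 ≠ 0) :
    Nat.card {z : Fin d → ZMod M // ∑ i, a i * z i = 0} ≤ M ^ (d - 1) := by
  haveI : Fact M.Prime := ⟨hM⟩
  have hinj : Function.Injective
      (fun z : {z : Fin d → ZMod M // ∑ i, a i * z i = 0} =>
        (fun i : {i : Fin d // i ≠ i0} => z.1 i.1)) := by
    rintro ⟨z, hz⟩ ⟨z', hz'⟩ hzz
    have hr : ∀ i : Fin d, i ≠ i0 → z i = z' i := by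
      intro i hi
      exact congrFun hzz ⟨i, hi⟩
    have hsum : ∀ w : Fin d → ZMod M, ∑ i, a i * w i
        = a i0 * w i0 + ∑ i ∈ Finset.univ.erase i0, a i * w i := by
      intro w
      exact (Finset.add_sum_erase _ (fun i => a i * w i) (Finset.mem_univ i0)).symm
    have he : ∑ i ∈ Finset.univ.erase i0, a i * z i
        = ∑ i ∈ Finset.univ.erase i0, a i * z' i := by
      refine Finset.sum_congr rfl fun i hi => ?_
      rw [hr i (Finset.ne_of_mem_erase hi)]
    have : a i0 * z i0 = a i0 * z' i0 := by
      have h1 := hsum z; have h2 := hsum z'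
      rw [hz] at h1; rw [hz'] at h2
      rw [he] at h1
      linear_combination h2 - h1
    have hz0 : z i0 = z' i0 := mul_left_cancel₀ ha this
    ext i
    by_cases h : i = i0
    · subst h; exact hz0
    · exact hr i h
  calc Nat.card {z : Fin d → ZMod M // ∑ i, a i * z i = 0}
      ≤ Nat.card ({i : Fin d // i ≠ i0} → ZMod M) := Nat.card_le_card_of_injective _ hinj
    _ = M ^ (d - 1) := by
        rw [Nat.card_eq_fintype_card, Fintype.card_fun, ZMod.card]
        congr 1
        simp [Fintype.card_subtype_compl]

lemma mod_iff_zmod {d M : ℕ} (k h : Fin d → ℤ) (z : Fin d → Fin M) :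
    ((∑ i, k i * ((z i : ℕ) : ℤ)) % (M : ℤ) = (∑ i, h i * ((z i : ℕ) : ℤ)) % (M : ℤ))
    ↔ ∑ i, ((k i - h i : ℤ) : ZMod M) * ((z i : ℕ) : ZMod M) = 0 := by
  have hc : ∀ g : Fin d → ℤ, ((∑ i, g i * ((z i : ℕ) : ℤ) : ℤ) : ZMod M)
      = ∑ i, ((g i : ℤ) : ZMod M) * ((z i : ℕ) : ZMod M) := by
    intro g; push_cast; ring
  have h1 : ((∑ i, k i * ((z i : ℕ) : ℤ)) % (M : ℤ) = (∑ i, h i * ((z i : ℕ) : ℤ)) % (M : ℤ))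
      ↔ ((∑ i, k i * ((z i : ℕ) : ℤ) : ℤ) : ZMod M) = ((∑ i, h i * ((z i : ℕ) : ℤ) : ℤ) : ZMod M) :=
    (ZMod.intCast_eq_intCast_iff _ _ _).symm
  rw [h1, hc k, hc h, ← sub_eq_zero, ← Finset.sum_sub_distrib]
  simp only [Int.cast_sub, sub_mul]

lemma log_lower {c : ℝ} (hc : 1 < c) : 2 * ((c - 1) / c) ^ 2 ≤ Real.log c := by
  have hc0 : 0 < c := by linarith
  set r : ℝ := c⁻¹ ^ ((4 : ℝ)⁻¹) with hrdef
  have hr0 : 0 < r := Real.rpow_pos_of_pos (by positivity) _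
  have hr1 : r < 1 := by
    apply Real.rpow_lt_one (by positivity) (by rw [inv_lt_one_iff₀]; right; exact hc) (by norm_num)
  have hr4 : r ^ (4 : ℕ) = c⁻¹ := by
    rw [hrdef, ← Real.rpow_natCast (c⁻¹ ^ ((4:ℝ)⁻¹)) 4, ← Real.rpow_mul (by positivity)]
    norm_num
  have hlogr : Real.log r ≤ r - 1 := Real.log_le_sub_one_of_pos hr0
  have hlogc : Real.log c = -(4 * Real.log r) := by
    have : Real.log (r ^ (4:ℕ)) = 4 * Real.log r := by
      rw [Real.log_pow]; push_cast; ring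
    rw [← this, hr4, Real.log_inv]; ring
  -- polynomial inequality
  have hpoly : (1 - r ^ 4) ^ 2 ≤ 2 * (1 - r) := by
    nlinarith [sq_nonneg (r^2 + r - 1), sq_nonneg (r^3 - r), sq_nonneg (r^2 - r),
      mul_nonneg (mul_nonneg hr0.le hr0.le) hr0.le, sq_nonneg (1 - r), sq_nonneg (r^3 + r^2 - 1),
      mul_nonneg (sub_nonneg.mpr hr1.le) (sq_nonneg (r^2 + r - 1)),
      mul_nonneg hr0.le (sq_nonneg (r^3 - 1))]
  have hfrac : (c - 1) / c = 1 - r ^ 4 := by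
    rw [hr4]
    field_simp
  rw [hfrac, hlogc]
  nlinarith [hlogr]

lemma pow_bound (δ c : ℝ) (T s : ℕ) (hδ0 : 0 < δ) (hδ1 : δ < 1) (hc : 1 < c) (hT2 : 2 ≤ T)
    (hs : (c / (c - 1)) ^ 2 * (Real.log T - Real.log δ) / 2 ≤ s) :
    (1 / c) ^ s ≤ δ / T := by
  have hT0 : (0:ℝ) < T := by positivity
  have hT1 : (1:ℝ) < T := by exact_mod_cast hT2.trans_lt' one_lt_two
  have hL : 0 < Real.log T - Real.log δ := by
    have h1 : 0 < Real.log T := Real.log_pos hT1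
    have h2 : Real.log δ < 0 := Real.log_neg hδ0 hδ1
    linarith
  have hc0 : (0:ℝ) < c := by linarith
  have hlogc : 0 < Real.log c := Real.log_pos hc
  have hA : 2 ≤ (c / (c - 1)) ^ 2 * Real.log c := by
    have hll := log_lower hc
    have hcc : ((c - 1) / c) ^ 2 * (c / (c - 1)) ^ 2 = 1 := by
      field_simp
      exact div_self (sub_ne_zero.mpr (ne_of_gt hc))
    calc (2:ℝ) = 2 * (((c - 1) / c) ^ 2 * (c / (c - 1)) ^ 2) := by rw [hcc]; ring
      _ = (2 * ((c - 1) / c) ^ 2) * (c / (c - 1)) ^ 2 := by ring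
      _ ≤ Real.log c * (c / (c - 1)) ^ 2 := by
          exact mul_le_mul_of_nonneg_right hll (by positivity)
      _ = (c / (c - 1)) ^ 2 * Real.log c := by ring
  have hslog : Real.log T - Real.log δ ≤ s * Real.log c := by
    calc Real.log T - Real.log δ
        ≤ (c / (c - 1)) ^ 2 * (Real.log T - Real.log δ) / 2 * Real.log c := by
          nlinarith
      _ ≤ s * Real.log c := mul_le_mul_of_nonneg_right hs hlogc.le
  have hcs : (T:ℝ) / δ ≤ c ^ s := by
    have h2 : Real.log ((T:ℝ) / δ) ≤ Real.log (c ^ s) := by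
      rw [Real.log_div hT0.ne' hδ0.ne', Real.log_pow]
      exact_mod_cast hslog
    exact (Real.log_le_log_iff (by positivity) (by positivity)).mp h2
  rw [div_pow, one_pow, div_le_div_iff₀ (by positivity) hT0]
  have := (div_le_iff₀ hδ0).mp hcs
  nlinarith

lemma bad_count {d M : ℕ} (hM : M.Prime) (I : Finset (Fin d → ℤ)) (k : Fin d → ℤ) (hk : k ∈ I)
    (hinj : Set.InjOn (fun h : Fin d → ℤ => fun i => h i % (M : ℤ)) (↑I : Set (Fin d → ℤ))) :
    Nat.card {z : Fin d → Fin M // ∃ h ∈ I, h ≠ k ∧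
        (∑ i, k i * ((z i : ℕ) : ℤ)) % (M : ℤ) = (∑ i, h i * ((z i : ℕ) : ℤ)) % (M : ℤ)}
      ≤ (I.card - 1) * M ^ (d - 1) := by
  haveI : NeZero M := ⟨hM.pos.ne'⟩
  -- the equivalence Fin M ≃ ZMod M
  let e : Fin M ≃ ZMod M :=
    { toFun := fun x => ((x : ℕ) : ZMod M)
      invFun := fun w => ⟨w.val, w.val_lt⟩
      left_inv := fun x => by
        ext
        simp [ZMod.val_cast_of_lt x.isLt]
      right_inv := fun w => by simp [ZMod.natCast_val, ZMod.cast_id] }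
  have hcard : Nat.card {z : Fin d → Fin M // ∃ h ∈ I, h ≠ k ∧
        (∑ i, k i * ((z i : ℕ) : ℤ)) % (M : ℤ) = (∑ i, h i * ((z i : ℕ) : ℤ)) % (M : ℤ)}
      = Nat.card {w : Fin d → ZMod M // ∃ h ∈ I, h ≠ k ∧
        ∑ i, ((k i - h i : ℤ) : ZMod M) * w i = 0} := by
    refine Nat.card_congr ((Equiv.piCongrRight fun _ => e).subtypeEquiv fun z => ?_)
    simp only [Equiv.piCongrRight_apply, Pi.map_apply]
    constructor
    · rintro ⟨h, hI, hne, heq⟩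
      exact ⟨h, hI, hne, (mod_iff_zmod k h z).mp heq⟩
    · rintro ⟨h, hI, hne, heq⟩
      exact ⟨h, hI, hne, (mod_iff_zmod k h z).mpr heq⟩
  rw [hcard]
  -- union bound over h ∈ I.erase k
  classical
  have hsub : (Finset.univ.filter (fun w : Fin d → ZMod M => ∃ h ∈ I, h ≠ k ∧
        ∑ i, ((k i - h i : ℤ) : ZMod M) * w i = 0))
      ⊆ (I.erase k).biUnion (fun h => Finset.univ.filter
          (fun w : Fin d → ZMod M => ∑ i, ((k i - h i : ℤ) : ZMod M) * w i = 0)) := by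
    intro w hw
    simp only [Finset.mem_filter, Finset.mem_univ, true_and] at hw
    obtain ⟨h, hI, hne, heq⟩ := hw
    refine Finset.mem_biUnion.mpr ⟨h, Finset.mem_erase.mpr ⟨hne, hI⟩, ?_⟩
    simpa using heq
  have hfiber : ∀ h ∈ I.erase k,
      (Finset.univ.filter
        (fun w : Fin d → ZMod M => ∑ i, ((k i - h i : ℤ) : ZMod M) * w i = 0)).card
      ≤ M ^ (d - 1) := by
    intro h hh
    obtain ⟨hne, hI⟩ := Finset.mem_erase.mp hh
    -- find a coordinate where k and h differ mod M
    have hex : ∃ i0, ((k i0 - h i0 : ℤ) : ZMod M) ≠ 0 := by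
      by_contra hcon
      push_neg at hcon
      apply hne
      apply hinj hI hk
      funext i
      have hd : (M : ℤ) ∣ k i - h i := (ZMod.intCast_zmod_eq_zero_iff_dvd _ _).mp (hcon i)
      exact Int.modEq_iff_dvd.mpr hd
    obtain ⟨i0, hi0⟩ := hex
    have := count_fiber hM (fun i => ((k i - h i : ℤ) : ZMod M)) i0 hi0
    rw [Nat.card_eq_fintype_card, Fintype.card_subtype] at this
    exact this
  calc Nat.card {w : Fin d → ZMod M // ∃ h ∈ I, h ≠ k ∧
        ∑ i, ((k i - h i : ℤ) : ZMod M) * w i = 0}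
      = (Finset.univ.filter (fun w : Fin d → ZMod M => ∃ h ∈ I, h ≠ k ∧
        ∑ i, ((k i - h i : ℤ) : ZMod M) * w i = 0)).card := by
        rw [Nat.card_eq_fintype_card, Fintype.card_subtype]
    _ ≤ ((I.erase k).biUnion (fun h => Finset.univ.filter
          (fun w : Fin d → ZMod M => ∑ i, ((k i - h i : ℤ) : ZMod M) * w i = 0))).card :=
        Finset.card_le_card hsub
    _ ≤ ∑ h ∈ I.erase k, (Finset.univ.filter
          (fun w : Fin d → ZMod M => ∑ i, ((k i - h i : ℤ) : ZMod M) * w i = 0)).card :=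
        Finset.card_biUnion_le
    _ ≤ ∑ _h ∈ I.erase k, M ^ (d - 1) := Finset.sum_le_sum hfiber
    _ = (I.card - 1) * M ^ (d - 1) := by
        rw [Finset.sum_const, smul_eq_mul, Finset.card_erase_of_mem hk]

/-- Theorem 3.2 of the paper: let `I ⊂ ℤ^d`, `|I| = T ≥ 2`, fix `k ∈ I`,
let `δ ∈ (0,1)`, `c > 1`, `λ ≥ c(T-1)`, and `s ≥ (c/(c-1))² (ln T - ln δ)/2`.
Let `M_1,…,M_s` be primes `> λ` (not necessarily distinct) such that `h ↦ h mod M_ℓ`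
is injective on `I`. If `z_1,…,z_s` are independent, uniformly distributed on
`{0,…,M_ℓ-1}^d`, then the probability that `k` aliases to another frequency of `I`
for **every** `ℓ` is at most `δ/T`. (Probability is expressed by counting: the number of
bad tuples is at most `δ/T` times the total number `∏_ℓ M_ℓ^d` of tuples.) -/
theorem statement5 {d : ℕ} (I : Finset (Fin d → ℤ)) (T : ℕ) (hT : I.card = T) (hT2 : 2 ≤ T)
    (k : Fin d → ℤ) (hk : k ∈ I)
    (δ c lam : ℝ) (hδ0 : 0 < δ) (hδ1 : δ < 1) (hc : 1 < c)
    (hlam : c * ((T : ℝ) - 1) ≤ lam)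
    (s : ℕ) (hs : (c / (c - 1)) ^ 2 * (Real.log T - Real.log δ) / 2 ≤ s)
    (M : Fin s → ℕ) (hMp : ∀ ℓ, (M ℓ).Prime) (hMgt : ∀ ℓ, lam < M ℓ)
    (hinj : ∀ ℓ, Set.InjOn (fun h : Fin d → ℤ => fun i => h i % (M ℓ : ℤ))
      (↑I : Set (Fin d → ℤ))) :
    (Nat.card {z : (ℓ : Fin s) → Fin d → Fin (M ℓ) //
        ∀ ℓ, ∃ h ∈ I, h ≠ k ∧
          (∑ i, k i * ((z ℓ i : ℕ) : ℤ)) % (M ℓ : ℤ)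
            = (∑ i, h i * ((z ℓ i : ℕ) : ℤ)) % (M ℓ : ℤ)} : ℝ)
      ≤ δ / T * ∏ ℓ, (M ℓ : ℝ) ^ d := by
  classical
  have hc0 : (0:ℝ) < c := by linarith
  have hT0 : (0:ℝ) < T := by positivity
  -- d ≥ 1
  have hd : 1 ≤ d := by
    by_contra hd0
    push_neg at hd0
    have hd0' : d = 0 := by omega
    subst hd0'
    have : I.card ≤ 1 := Finset.card_le_one.mpr (fun a _ b _ => funext fun i => i.elim0)
    omega
  -- product structure
  have hprod : Nat.card {z : (ℓ : Fin s) → Fin d → Fin (M ℓ) //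
        ∀ ℓ, ∃ h ∈ I, h ≠ k ∧
          (∑ i, k i * ((z ℓ i : ℕ) : ℤ)) % (M ℓ : ℤ)
            = (∑ i, h i * ((z ℓ i : ℕ) : ℤ)) % (M ℓ : ℤ)}
      = ∏ ℓ, Nat.card {w : Fin d → Fin (M ℓ) // ∃ h ∈ I, h ≠ k ∧
          (∑ i, k i * ((w i : ℕ) : ℤ)) % (M ℓ : ℤ)
            = (∑ i, h i * ((w i : ℕ) : ℤ)) % (M ℓ : ℤ)} := by
    rw [Nat.card_congr (Equiv.subtypePiEquivPi (p := fun ℓ (w : Fin d → Fin (M ℓ)) =>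
      ∃ h ∈ I, h ≠ k ∧ (∑ i, k i * ((w i : ℕ) : ℤ)) % (M ℓ : ℤ)
        = (∑ i, h i * ((w i : ℕ) : ℤ)) % (M ℓ : ℤ)))]
    rw [Nat.card_pi]
  -- per-ℓ bound in ℕ then product
  have hbad : ∀ ℓ, Nat.card {w : Fin d → Fin (M ℓ) // ∃ h ∈ I, h ≠ k ∧
          (∑ i, k i * ((w i : ℕ) : ℤ)) % (M ℓ : ℤ)
            = (∑ i, h i * ((w i : ℕ) : ℤ)) % (M ℓ : ℤ)} ≤ (T - 1) * (M ℓ) ^ (d - 1) := by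
    intro ℓ
    have := bad_count (hMp ℓ) I k hk (hinj ℓ)
    rwa [hT] at this
  -- real bound per factor
  have hfac : ∀ ℓ : Fin s, (((T - 1) * (M ℓ) ^ (d - 1) : ℕ) : ℝ) ≤ 1 / c * (M ℓ : ℝ) ^ d := by
    intro ℓ
    have h1T : 1 ≤ T := le_trans one_le_two hT2
    have hMc : c * ((T:ℝ) - 1) ≤ (M ℓ : ℝ) := hlam.trans (hMgt ℓ).le
    have hpow : (M ℓ : ℝ) ^ d = (M ℓ : ℝ) ^ (d - 1) * (M ℓ : ℝ) := by
      rw [← pow_succ, Nat.sub_add_cancel hd]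
    have hP : (0:ℝ) ≤ (M ℓ : ℝ) ^ (d - 1) := by positivity
    have hcast : (((T - 1) * (M ℓ) ^ (d - 1) : ℕ) : ℝ) = ((T:ℝ) - 1) * (M ℓ : ℝ) ^ (d - 1) := by
      rw [Nat.cast_mul, Nat.cast_pow, Nat.cast_sub h1T, Nat.cast_one]
    rw [hcast, hpow]
    rw [one_div, inv_mul_eq_div, le_div_iff₀ hc0]
    nlinarith [hMc, hP, (by exact_mod_cast hT2 : (2:ℝ) ≤ T)]
  -- assemble
  calc (Nat.card {z : (ℓ : Fin s) → Fin d → Fin (M ℓ) //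
        ∀ ℓ, ∃ h ∈ I, h ≠ k ∧
          (∑ i, k i * ((z ℓ i : ℕ) : ℤ)) % (M ℓ : ℤ)
            = (∑ i, h i * ((z ℓ i : ℕ) : ℤ)) % (M ℓ : ℤ)} : ℝ)
      = ∏ ℓ, (Nat.card {w : Fin d → Fin (M ℓ) // ∃ h ∈ I, h ≠ k ∧
          (∑ i, k i * ((w i : ℕ) : ℤ)) % (M ℓ : ℤ)
            = (∑ i, h i * ((w i : ℕ) : ℤ)) % (M ℓ : ℤ)} : ℝ) := by
        rw [hprod]; push_cast; ring
    _ ≤ ∏ ℓ, (1 / c * (M ℓ : ℝ) ^ d) := by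
        apply Finset.prod_le_prod
        · intro ℓ _; positivity
        · intro ℓ _
          calc (Nat.card _ : ℝ) ≤ (((T - 1) * (M ℓ) ^ (d - 1) : ℕ) : ℝ) := by
                exact_mod_cast hbad ℓ
            _ ≤ 1 / c * (M ℓ : ℝ) ^ d := hfac ℓ
    _ = (1 / c) ^ s * ∏ ℓ, (M ℓ : ℝ) ^ d := by
        rw [Finset.prod_mul_distrib, Finset.prod_const, Finset.card_univ, Fintype.card_fin]
    _ ≤ δ / T * ∏ ℓ, (M ℓ : ℝ) ^ d := by
        apply mul_le_mul_of_nonneg_right (pow_bound δ c T s hδ0 hδ1 hc hT2 hs)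
        positivity
end

section
/- Let I ⊂ ℤ^d be a finite frequency set and let z_1,…,z_s ∈ ℤ^d and M_1,…,M_s ∈ ℕ with M_ℓ ≥ 1. Suppose that for every k ∈ I there exists ℓ ∈ {1,…,s} such that k·z_ℓ ≢ h·z_ℓ (mod M_ℓ) for all h ∈ I∖{k}. Then the Fourier matrix A(Λ(z_1,M_1,…,z_s,M_s), I) has full column rank |I|; equivalently, the only vector (p̂_k)_{k∈I} ∈ ℂ^I with Σ_{k∈I} p̂_k e^{2πi (j/M_ℓ) k·z_ℓ} = 0 for all ℓ ∈ {1,…,s} and all j ∈ {0,…,M_ℓ−1} is the zero vector, so every trigonometric polynomial p ∈ Π_I is uniquely determined by its samples on ⋃_ℓ Λ(z_ℓ,M_ℓ). -/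
open scoped BigOperators

lemma geom_roots (Mn : ℕ) (hMn : 1 ≤ Mn) (a : ℤ) :
    ∑ j : Fin Mn, Complex.exp (2 * Real.pi * Complex.I * ((j : ℂ) / (Mn : ℂ)) * (a : ℂ))
      = if (Mn : ℤ) ∣ a then (Mn : ℂ) else 0 := by
  have hM0 : (Mn : ℂ) ≠ 0 := Nat.cast_ne_zero.mpr (by omega)
  have h2 : 2 * (Real.pi:ℂ) * Complex.I ≠ 0 := by
    simp [Real.pi_ne_zero, Complex.I_ne_zero]
  set ζ : ℂ := Complex.exp (2 * Real.pi * Complex.I * (a : ℂ) / (Mn : ℂ)) with hζ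
  have hterm : ∀ j : Fin Mn,
      Complex.exp (2 * Real.pi * Complex.I * ((j : ℂ) / (Mn : ℂ)) * (a : ℂ)) = ζ ^ (j : ℕ) := by
    intro j
    rw [hζ, ← Complex.exp_nat_mul]
    ring_nf
  rw [Finset.sum_congr rfl (fun j _ => hterm j)]
  rw [Fin.sum_univ_eq_sum_range (fun j => ζ ^ j)]
  by_cases hdvd : (Mn : ℤ) ∣ a
  · obtain ⟨n, hn⟩ := hdvd
    have hζ1 : ζ = 1 := by
      rw [hζ, hn]
      push_cast
      rw [show 2 * (Real.pi:ℂ) * Complex.I * ((Mn:ℂ) * (n:ℂ)) / (Mn:ℂ)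
            = (n:ℂ) * (2 * Real.pi * Complex.I) by field_simp]
      exact Complex.exp_int_mul_two_pi_mul_I n
    rw [if_pos ⟨n, hn⟩]
    simp [hζ1]
  · have hζ1 : ζ ≠ 1 := by
      intro h
      rw [hζ, Complex.exp_eq_one_iff] at h
      obtain ⟨n, hn⟩ := h
      apply hdvd
      have hca : (a : ℂ) = (Mn : ℂ) * (n : ℂ) := by
        field_simp at hn
        have := mul_left_cancel₀ h2
          (show 2 * (Real.pi:ℂ) * Complex.I * (a:ℂ)
              = 2 * (Real.pi:ℂ) * Complex.I * ((Mn:ℂ) * (n:ℂ)) by rw [hn])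
        exact this
      exact ⟨n, by exact_mod_cast hca⟩
    have hζM : ζ ^ Mn = 1 := by
      rw [hζ, ← Complex.exp_nat_mul]
      rw [show (Mn:ℂ) * (2 * Real.pi * Complex.I * (a:ℂ) / (Mn:ℂ))
            = (a:ℂ) * (2 * Real.pi * Complex.I) by field_simp]
      exact Complex.exp_int_mul_two_pi_mul_I a
    rw [if_neg hdvd, geom_sum_eq hζ1, hζM]
    simp

/-- The Fourier matrix of the multiple rank-1 lattice `Λ(z_1,M_1,…,z_s,M_s)` with respect to
the frequency set `I`: the row indexed by `(ℓ, j)` and the column indexed by `k ∈ I` carry the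
entry `e^{2πi (j/M_ℓ) k·z_ℓ}`. (The rows `j = 0` of the blocks `ℓ ≥ 2` are all-ones rows and
coincide with the row `(1, 0)`, so this matrix has the same rows — up to repetition — and in
particular the same column rank as the matrix obtained by stacking the block
`j = 0,…,M_1-1` and the blocks `j = 1,…,M_ℓ-1`, `ℓ ≥ 2`.) -/
noncomputable def multiFourier {d s : ℕ} (z : Fin s → Fin d → ℤ) (M : Fin s → ℕ)
    (I : Finset (Fin d → ℤ)) :
    Matrix ((ℓ : Fin s) × Fin (M ℓ)) {k // k ∈ I} ℂ :=
  fun r k => Complex.exp (2 * Real.pi * Complex.I * (((r.2 : ℕ) : ℂ) / (M r.1 : ℂ)) *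
    ((∑ i, k.1 i * z r.1 i : ℤ) : ℂ))

/-- if for every `k ∈ I` there is some `ℓ` such that `k` does not alias to any
other frequency of `I` modulo `M_ℓ` (i.e. `k·z_ℓ ≢ h·z_ℓ (mod M_ℓ)` for all `h ∈ I∖{k}`),
then the Fourier matrix of the multiple rank-1 lattice has full column rank `|I|`;
equivalently, the only coefficient vector `(p̂_k)_{k∈I}` all of whose lattice samples
`Σ_k p̂_k e^{2πi (j/M_ℓ) k·z_ℓ}` vanish is the zero vector, so every `p ∈ Π_I` is uniquely
determined by its samples on `⋃_ℓ Λ(z_ℓ, M_ℓ)`. -/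
theorem statement7 {d s : ℕ} (I : Finset (Fin d → ℤ)) (z : Fin s → Fin d → ℤ)
    (M : Fin s → ℕ) (hM : ∀ ℓ, 1 ≤ M ℓ)
    (hcov : ∀ k ∈ I, ∃ ℓ, ∀ h ∈ I, h ≠ k →
        (∑ i, k i * z ℓ i) % (M ℓ : ℤ) ≠ (∑ i, h i * z ℓ i) % (M ℓ : ℤ)) :
    (multiFourier z M I).rank = I.card
    ∧ ∀ v : {k // k ∈ I} → ℂ, (multiFourier z M I).mulVec v = 0 → v = 0 := by
  have hinj : ∀ v : {k // k ∈ I} → ℂ, (multiFourier z M I).mulVec v = 0 → v = 0 := by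
    intro v hv
    funext k0
    obtain ⟨ℓ, hℓ⟩ := hcov k0.1 k0.2
    set c : {k // k ∈ I} → ℤ := fun k => ∑ i, k.1 i * z ℓ i with hc
    have key : ∑ j : Fin (M ℓ),
        Complex.exp (2 * Real.pi * Complex.I * ((j : ℂ) / (M ℓ : ℂ)) * (-(c k0) : ℤ)) *
          ((multiFourier z M I).mulVec v ⟨ℓ, j⟩) = 0 := by
      simp [hv]
    have expand : ∀ j : Fin (M ℓ),
        Complex.exp (2 * Real.pi * Complex.I * ((j : ℂ) / (M ℓ : ℂ)) * (-(c k0) : ℤ)) *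
          ((multiFourier z M I).mulVec v ⟨ℓ, j⟩)
        = ∑ k : {k // k ∈ I}, v k *
            Complex.exp (2 * Real.pi * Complex.I * ((j : ℂ) / (M ℓ : ℂ)) * ((c k - c k0 : ℤ) : ℂ)) := by
      intro j
      simp only [Matrix.mulVec, dotProduct]
      rw [Finset.mul_sum]
      refine Finset.sum_congr rfl fun k _ => ?_
      simp only [multiFourier, hc]
      rw [← mul_assoc]
      rw [← Complex.exp_add]
      push_cast
      ring_nf
    rw [Finset.sum_congr rfl (fun j _ => expand j), Finset.sum_comm] at key
    have key2 : ∀ k : {k // k ∈ I},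
        ∑ j : Fin (M ℓ), v k *
            Complex.exp (2 * Real.pi * Complex.I * ((j : ℂ) / (M ℓ : ℂ)) * ((c k - c k0 : ℤ) : ℂ))
        = v k * (if ((M ℓ : ℤ)) ∣ (c k - c k0) then ((M ℓ : ℕ) : ℂ) else 0) := by
      intro k
      rw [← Finset.mul_sum, geom_roots (M ℓ) (hM ℓ) (c k - c k0)]
    rw [Finset.sum_congr rfl (fun k _ => key2 k)] at key
    have single : ∑ k : {k // k ∈ I}, v k *
        (if ((M ℓ : ℤ)) ∣ (c k - c k0) then ((M ℓ : ℕ) : ℂ) else 0) = v k0 * (M ℓ : ℂ) := by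
      rw [Finset.sum_eq_single k0]
      · rw [if_pos (by simp)]
      · intro k _ hk
        have hne : k.1 ≠ k0.1 := fun h => hk (Subtype.ext h)
        have hnd : ¬ ((M ℓ : ℤ)) ∣ (c k - c k0) := by
          intro hd
          exact hℓ k.1 k.2 hne (Int.modEq_iff_dvd.mpr hd)
        rw [if_neg hnd, mul_zero]
      · intro h; exact absurd (Finset.mem_univ k0) h
    rw [single] at key
    have hM0 : ((M ℓ : ℕ) : ℂ) ≠ 0 := Nat.cast_ne_zero.mpr (by have := hM ℓ; omega)
    simpa [hM0] using key
  refine ⟨?_, hinj⟩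
  have hker : Function.Injective (multiFourier z M I).mulVecLin := by
    rw [← LinearMap.ker_eq_bot, LinearMap.ker_eq_bot']
    intro v hv
    exact hinj v hv
  rw [Matrix.rank, LinearMap.finrank_range_of_inj hker]
  simp [Module.finrank_fintype_fun_eq_card]
end

section
/- Let I ⊂ ℤ^d be a finite frequency set with T := |I| ≥ 4 whose expansion satisfies N_I ≤ 2(T−1) (i.e. I is contained in a d-dimensional box of edge length 2(T−1)). Then there exist a natural number s ≥ 1, a prime number M with 2(T−1) < M ≤ 4(T−1), and generating vectors z_1,…,z_s ∈ {0,…,M−1}^d ∩ ℤ^d such that the Fourier matrix A(Λ(z_1,M,…,z_s,M), I) has full column rank T (so the multiple rank-1 lattice is reconstructing for I) and the total number of sampling nodes satisfies |⋃_{ℓ=1}^s Λ(z_ℓ,M)| ≤ 1 + s(M−1) ≤ 10 · T · ln T. -/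
open scoped BigOperators

section Aux

/-- Geometric sum of `M`-th roots of unity. -/
lemma statement9_expsum (M : ℕ) (hM : 0 < M) (a : ℤ) :
    ∑ j : Fin M, Complex.exp (2 * Real.pi * Complex.I * (((j : ℕ) : ℂ) / (M : ℂ)) * (a : ℂ))
      = if (a : ZMod M) = 0 then (M : ℂ) else 0 := by
  have hM0 : (M : ℂ) ≠ 0 := Nat.cast_ne_zero.mpr hM.ne'
  set ζ : ℂ := Complex.exp (2 * Real.pi * Complex.I * (a : ℂ) / (M : ℂ)) with hζ
  have hterm : ∀ j : Fin M,
      Complex.exp (2 * Real.pi * Complex.I * (((j : ℕ) : ℂ) / (M : ℂ)) * (a : ℂ))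
        = ζ ^ (j : ℕ) := by
    intro j
    rw [hζ, ← Complex.exp_nat_mul]
    congr 1
    ring
  rw [Finset.sum_congr rfl (fun j _ => hterm j), Fin.sum_univ_eq_sum_range]
  by_cases hdvd : (a : ZMod M) = 0
  · rw [if_pos hdvd]
    obtain ⟨c, hc⟩ := (ZMod.intCast_zmod_eq_zero_iff_dvd a M).mp hdvd
    have hζ1 : ζ = 1 := by
      rw [hζ]
      have : 2 * Real.pi * Complex.I * (a : ℂ) / (M : ℂ) = (c : ℂ) * (2 * Real.pi * Complex.I) := by
        have : (a : ℂ) = (M : ℂ) * (c : ℂ) := by exact_mod_cast congrArg (Int.cast : ℤ → ℂ) hc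
        field_simp [this]
        linear_combination this
      rw [this, Complex.exp_int_mul_two_pi_mul_I]
    simp [hζ1]
  · rw [if_neg hdvd]
    have hMdvd : ¬ (M : ℤ) ∣ a := fun h => hdvd ((ZMod.intCast_zmod_eq_zero_iff_dvd a M).mpr h)
    have hζM : ζ ^ M = 1 := by
      rw [hζ, ← Complex.exp_nat_mul]
      have : (M : ℂ) * (2 * Real.pi * Complex.I * (a : ℂ) / (M : ℂ))
          = (a : ℂ) * (2 * Real.pi * Complex.I) := by field_simp
      rw [this, Complex.exp_int_mul_two_pi_mul_I]
    have hζ1 : ζ ≠ 1 := by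
      intro h1
      rw [hζ, Complex.exp_eq_one_iff] at h1
      obtain ⟨n, hn⟩ := h1
      apply hMdvd
      refine ⟨n, ?_⟩
      have h2 : (2 * (Real.pi : ℂ) * Complex.I : ℂ) ≠ 0 := by
        simp [Real.pi_ne_zero, Complex.I_ne_zero]
      have hac : (a : ℂ) = (M : ℂ) * (n : ℂ) := by
        field_simp at hn
        apply mul_left_cancel₀ h2
        linear_combination (2 * (Real.pi : ℂ) * Complex.I) * hn
      exact_mod_cast hac
    rw [geom_sum_eq hζ1, hζM]
    simp

/-- Number of solutions of one homogeneous linear equation over `ZMod M`. -/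
lemma statement9_kerbound {M d : ℕ} [Fact (Nat.Prime M)] (a : Fin d → ZMod M) (i0 : Fin d)
    (ha : a i0 ≠ 0) :
    (Finset.univ.filter fun v : Fin d → ZMod M => ∑ i, a i * v i = 0).card ≤ M ^ (d - 1) := by
  have : NeZero M := ⟨(Fact.out (p := Nat.Prime M)).pos.ne'⟩
  have hcard : Fintype.card ({i : Fin d // i ≠ i0} → ZMod M) = M ^ (d - 1) := by
    rw [Fintype.card_fun, ZMod.card]
    congr 1
    rw [Fintype.card_subtype_compl, Fintype.card_subtype_eq, Fintype.card_fin]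
  calc (Finset.univ.filter fun v : Fin d → ZMod M => ∑ i, a i * v i = 0).card
      ≤ (Finset.univ : Finset ({i : Fin d // i ≠ i0} → ZMod M)).card := by
        apply Finset.card_le_card_of_injOn (fun v => fun i => v i.1)
        · intro v _; exact Finset.mem_univ _
        · intro v hv w hw hvw
          simp only [Finset.mem_coe, Finset.mem_filter] at hv hw
          funext i
          by_cases hi : i = i0
          · subst hi
            have hv' := hv.2
            have hw' := hw.2
            rw [← Finset.add_sum_erase _ _ (Finset.mem_univ i)] at hv' hw'
            have hsum : ∑ x ∈ Finset.univ.erase i, a x * v x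
                = ∑ x ∈ Finset.univ.erase i, a x * w x := by
              apply Finset.sum_congr rfl
              intro x hx
              have hx' : x ≠ i := Finset.ne_of_mem_erase hx
              have := congrFun hvw ⟨x, hx'⟩
              simp only at this
              rw [this]
            rw [hsum] at hv'
            have h3 : a i * v i = a i * w i := by
              have := hv'.trans hw'.symm
              exact add_right_cancel this
            exact mul_left_cancel₀ ha h3
          · exact congrFun hvw ⟨i, hi⟩
    _ = M ^ (d - 1) := by rw [Finset.card_univ, hcard]

/-- Existence of a good tuple of generating vectors, by counting. -/
lemma statement9_goodexists {d M : ℕ} [Fact (Nat.Prime M)] (I : Finset (Fin d → ℤ)) (T s : ℕ)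
    (hT : I.card = T) (hd : 1 ≤ d) (hT2 : 2 ≤ T)
    (hs : T < 2 ^ s) (hM : 2 * (T - 1) < M)
    (hsmall : ∀ k ∈ I, ∀ l ∈ I, k ≠ l → ∃ i, ((k i - l i : ℤ) : ZMod M) ≠ 0) :
    ∃ w : Fin s → Fin d → ZMod M, ∀ k ∈ I, ∃ ℓ : Fin s,
      ∀ l ∈ I, l ≠ k → (∑ i, ((k i - l i : ℤ) : ZMod M) * w ℓ i) ≠ 0 := by
  classical
  have hMpos : 0 < M := (Fact.out (p := Nat.Prime M)).pos
  set Bad : Finset (Fin s → Fin d → ZMod M) :=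
    I.biUnion (fun k => Finset.univ.filter (fun w : Fin s → Fin d → ZMod M =>
      ∀ ℓ, ∃ l ∈ I, l ≠ k ∧ ∑ i, ((k i - l i : ℤ) : ZMod M) * w ℓ i = 0)) with hBad
  have hblock : ∀ k ∈ I,
      (Finset.univ.filter (fun w : Fin s → Fin d → ZMod M =>
        ∀ ℓ, ∃ l ∈ I, l ≠ k ∧ ∑ i, ((k i - l i : ℤ) : ZMod M) * w ℓ i = 0)).card
      ≤ ((T - 1) * M ^ (d - 1)) ^ s := by
    intro k hk
    have hBk : (Finset.univ.filter (fun v : Fin d → ZMod M =>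
        ∃ l ∈ I, l ≠ k ∧ ∑ i, ((k i - l i : ℤ) : ZMod M) * v i = 0)).card
        ≤ (T - 1) * M ^ (d - 1) := by
      have hsub : (Finset.univ.filter (fun v : Fin d → ZMod M =>
          ∃ l ∈ I, l ≠ k ∧ ∑ i, ((k i - l i : ℤ) : ZMod M) * v i = 0))
          ⊆ (I.erase k).biUnion (fun l => Finset.univ.filter
              (fun v : Fin d → ZMod M => ∑ i, ((k i - l i : ℤ) : ZMod M) * v i = 0)) := by
        intro v hv
        simp only [Finset.mem_filter, Finset.mem_univ, true_and] at hv
        obtain ⟨l, hl, hlk, hsum⟩ := hv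
        refine Finset.mem_biUnion.mpr ⟨l, Finset.mem_erase.mpr ⟨hlk, hl⟩, ?_⟩
        simp only [Finset.mem_filter, Finset.mem_univ, true_and]
        exact hsum
      calc _ ≤ ((I.erase k).biUnion (fun l => Finset.univ.filter
              (fun v : Fin d → ZMod M => ∑ i, ((k i - l i : ℤ) : ZMod M) * v i = 0))).card :=
            Finset.card_le_card hsub
        _ ≤ ∑ l ∈ I.erase k, (Finset.univ.filter
              (fun v : Fin d → ZMod M => ∑ i, ((k i - l i : ℤ) : ZMod M) * v i = 0)).card :=
            Finset.card_biUnion_le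
        _ ≤ ∑ l ∈ I.erase k, M ^ (d - 1) := by
            apply Finset.sum_le_sum
            intro l hl
            obtain ⟨i0, hi0⟩ := hsmall k hk l (Finset.mem_of_mem_erase hl)
              (fun h => (Finset.mem_erase.mp hl).1 h.symm)
            exact statement9_kerbound _ i0 hi0
        _ = (T - 1) * M ^ (d - 1) := by
            rw [Finset.sum_const, smul_eq_mul, Finset.card_erase_of_mem hk, hT]
    calc _ ≤ (Fintype.piFinset (fun _ : Fin s => Finset.univ.filter (fun v : Fin d → ZMod M =>
          ∃ l ∈ I, l ≠ k ∧ ∑ i, ((k i - l i : ℤ) : ZMod M) * v i = 0))).card := by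
          apply Finset.card_le_card
          intro w hw
          simp only [Finset.mem_filter, Finset.mem_univ, true_and] at hw
          rw [Fintype.mem_piFinset]
          intro ℓ
          simp only [Finset.mem_filter, Finset.mem_univ, true_and]
          exact hw ℓ
      _ = ∏ _ℓ : Fin s, (Finset.univ.filter (fun v : Fin d → ZMod M =>
          ∃ l ∈ I, l ≠ k ∧ ∑ i, ((k i - l i : ℤ) : ZMod M) * v i = 0)).card :=
          Fintype.card_piFinset _
      _ ≤ ((T - 1) * M ^ (d - 1)) ^ s := by
          rw [Finset.prod_const, Finset.card_univ, Fintype.card_fin]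
          exact Nat.pow_le_pow_left hBk s
  have hBadcard : Bad.card < Fintype.card (Fin s → Fin d → ZMod M) := by
    have h1 : Bad.card ≤ T * ((T - 1) * M ^ (d - 1)) ^ s := by
      calc Bad.card ≤ ∑ k ∈ I, ((T - 1) * M ^ (d - 1)) ^ s := by
            refine Finset.card_biUnion_le.trans (Finset.sum_le_sum hblock)
        _ = T * ((T - 1) * M ^ (d - 1)) ^ s := by rw [Finset.sum_const, smul_eq_mul, hT]
    have hs0 : s ≠ 0 := by
      rintro rfl; simp at hs; omega
    have h2 : T * ((T - 1) * M ^ (d - 1)) ^ s < (M ^ d) ^ s := by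
      have hkey : T * (T - 1) ^ s < M ^ s := by
        calc T * (T - 1) ^ s < 2 ^ s * (T - 1) ^ s := by
              exact (Nat.mul_lt_mul_right (pow_pos (by omega) s)).mpr hs
          _ = (2 * (T - 1)) ^ s := (mul_pow 2 (T - 1) s).symm
          _ < M ^ s := Nat.pow_lt_pow_left hM hs0
      calc T * ((T - 1) * M ^ (d - 1)) ^ s = T * (T - 1) ^ s * (M ^ (d - 1)) ^ s := by
            rw [mul_pow]; ring
        _ < M ^ s * (M ^ (d - 1)) ^ s := by
            exact (Nat.mul_lt_mul_right (pow_pos (pow_pos hMpos _) s)).mpr hkey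
        _ = (M ^ d) ^ s := by
            rw [← mul_pow, ← pow_succ']
            congr 2
            omega
    have h3 : Fintype.card (Fin s → Fin d → ZMod M) = (M ^ d) ^ s := by
      simp [ZMod.card]
    omega
  obtain ⟨w, hw⟩ : ∃ w, w ∉ Bad := by
    by_contra h
    push_neg at h
    have hsub : (Finset.univ : Finset (Fin s → Fin d → ZMod M)) ⊆ Bad := fun w _ => h w
    have := Finset.card_le_card hsub
    rw [Finset.card_univ] at this
    omega
  refine ⟨w, ?_⟩
  intro k hk
  have hw' : ¬ (∀ ℓ : Fin s, ∃ l ∈ I, l ≠ k ∧ ∑ i, ((k i - l i : ℤ) : ZMod M) * w ℓ i = 0) := by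
    intro hcon
    apply hw
    rw [hBad]
    refine Finset.mem_biUnion.mpr ⟨k, hk, ?_⟩
    simp only [Finset.mem_filter, Finset.mem_univ, true_and]
    exact hcon
  push_neg at hw'
  exact hw'

/-- Full column rank from per-frequency aliasing-freeness. -/
lemma statement9_rankfull {d s M : ℕ} (hM : 0 < M) (I : Finset (Fin d → ℤ))
    (z : Fin s → Fin d → ℤ)
    (hgood : ∀ k ∈ I, ∃ ℓ : Fin s, ∀ l ∈ I, l ≠ k →
      ((∑ i, l i * z ℓ i - ∑ i, k i * z ℓ i : ℤ) : ZMod M) ≠ 0) :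
    (multiFourier z (fun _ => M) I).rank = I.card := by
  classical
  set A := multiFourier z (fun _ => M) I with hA
  have hinj : Function.Injective A.mulVecLin := by
    rw [← LinearMap.ker_eq_bot, LinearMap.ker_eq_bot']
    intro v hv
    funext k0
    obtain ⟨ℓ, hℓ⟩ := hgood k0.1 k0.2
    have hrow : ∀ j : Fin M, ∑ k : {k // k ∈ I}, A ⟨ℓ, j⟩ k * v k = 0 := by
      intro j
      have h := congrFun hv ⟨ℓ, j⟩
      simpa [Matrix.mulVecLin_apply, Matrix.mulVec, dotProduct] using h
    set a : {k // k ∈ I} → ℤ := fun k => ∑ i, k.1 i * z ℓ i with ha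
    have key : ∑ j : Fin M, Complex.exp
        (-(2 * Real.pi * Complex.I * (((j : ℕ) : ℂ) / (M : ℂ)) * ((a k0 : ℤ) : ℂ)))
        * (∑ k : {k // k ∈ I}, A ⟨ℓ, j⟩ k * v k) = 0 := by
      simp only [hrow, mul_zero, Finset.sum_const_zero]
    have hswap : ∑ j : Fin M, Complex.exp
        (-(2 * Real.pi * Complex.I * (((j : ℕ) : ℂ) / (M : ℂ)) * ((a k0 : ℤ) : ℂ)))
        * (∑ k : {k // k ∈ I}, A ⟨ℓ, j⟩ k * v k)
        = ∑ k : {k // k ∈ I}, (∑ j : Fin M, Complex.exp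
            (2 * Real.pi * Complex.I * (((j : ℕ) : ℂ) / (M : ℂ)) * ((a k - a k0 : ℤ) : ℂ))) * v k := by
      simp_rw [Finset.mul_sum]
      rw [Finset.sum_comm]
      apply Finset.sum_congr rfl
      intro k _
      rw [Finset.sum_mul]
      apply Finset.sum_congr rfl
      intro j _
      have hAval : A ⟨ℓ, j⟩ k = Complex.exp
          (2 * Real.pi * Complex.I * (((j : ℕ) : ℂ) / (M : ℂ)) * ((a k : ℤ) : ℂ)) := rfl
      rw [hAval, ← mul_assoc, ← Complex.exp_add]
      congr 2
      push_cast
      ring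
    rw [hswap] at key
    have heval : ∀ k : {k // k ∈ I},
        (∑ j : Fin M, Complex.exp
            (2 * Real.pi * Complex.I * (((j : ℕ) : ℂ) / (M : ℂ)) * ((a k - a k0 : ℤ) : ℂ))) * v k
        = if k = k0 then (M : ℂ) * v k0 else 0 := by
      intro k
      rw [statement9_expsum M hM]
      by_cases hk : k = k0
      · subst hk
        simp
      · rw [if_neg, if_neg hk, zero_mul]
        have := hℓ k.1 k.2 (fun h => hk (Subtype.ext h))
        simpa [ha] using this
    rw [Finset.sum_congr rfl (fun k _ => heval k)] at key
    rw [Finset.sum_ite_eq' Finset.univ k0] at key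
    simp only [Finset.mem_univ, if_true] at key
    have hM0 : (M : ℂ) ≠ 0 := Nat.cast_ne_zero.mpr hM.ne'
    have hk0 : v k0 = 0 := by
      rcases mul_eq_zero.mp key with h | h
      · exact absurd h hM0
      · exact h
    simpa using hk0
  rw [Matrix.rank, LinearMap.finrank_range_of_inj hinj, Module.finrank_pi, Fintype.card_coe]

end Aux

/-- for every finite `I ⊂ ℤ^d` with `T = |I| ≥ 4` and expansion
`N_I ≤ 2(T-1)` there exist `s ≥ 1`, a prime `M` with `2(T-1) < M ≤ 4(T-1)` and generating
vectors `z_1,…,z_s ∈ {0,…,M-1}^d` such that the multiple rank-1 lattice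
`Λ(z_1,M,…,z_s,M)` is reconstructing for `I` (its Fourier matrix has full column rank `T`)
and the total number of sampling nodes satisfies
`|⋃_ℓ Λ(z_ℓ,M)| ≤ 1 + s(M-1) ≤ 10·T·ln T`. -/
theorem statement9 {d : ℕ} (I : Finset (Fin d → ℤ)) (T : ℕ) (hT : I.card = T) (hT4 : 4 ≤ T)
    (hNI : ∀ k ∈ I, ∀ l ∈ I, ∀ j, k j - l j ≤ 2 * ((T : ℤ) - 1)) :
    ∃ (s M : ℕ) (z : Fin s → Fin d → ℤ),
      1 ≤ s ∧ M.Prime ∧ 2 * (T - 1) < M ∧ M ≤ 4 * (T - 1) ∧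
      (∀ ℓ i, 0 ≤ z ℓ i ∧ z ℓ i ≤ (M : ℤ) - 1) ∧
      (multiFourier z (fun _ => M) I).rank = T ∧
      (Finset.image (fun r : Fin s × Fin M =>
          fun i => Int.fract (((r.2 : ℕ) : ℝ) / (M : ℝ) * (z r.1 i : ℝ))) Finset.univ).card
        ≤ 1 + s * (M - 1) ∧
      ((1 : ℝ) + s * ((M : ℝ) - 1)) ≤ 10 * T * Real.log T := by
  classical
  -- the dimension is positive
  have hd : 1 ≤ d := by
    by_contra h
    have hd0 : d = 0 := by omega
    subst hd0
    have : I.card ≤ 1 := Finset.card_le_one.mpr (fun a _ b _ => Subsingleton.elim a b)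
    omega
  -- Bertrand: a prime between 2(T-1) and 4(T-1)
  obtain ⟨M, hMp, hMgt, hMle2⟩ := Nat.exists_prime_lt_and_le_two_mul (2 * (T - 1)) (by omega)
  have hMle : M ≤ 4 * (T - 1) := by omega
  haveI : Fact M.Prime := ⟨hMp⟩
  haveI : NeZero M := ⟨hMp.pos.ne'⟩
  have hMpos : 0 < M := hMp.pos
  set s := Nat.log 2 T + 1 with hsdef
  have hs2 : T < 2 ^ s := Nat.lt_pow_succ_log_self (by norm_num) T
  -- frequencies are separated mod M
  have hsmall : ∀ k ∈ I, ∀ l ∈ I, k ≠ l → ∃ i, ((k i - l i : ℤ) : ZMod M) ≠ 0 := by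
    intro k hk l hl hkl
    have : ∃ i, k i ≠ l i := by
      by_contra h
      push_neg at h
      exact hkl (funext h)
    obtain ⟨i, hi⟩ := this
    refine ⟨i, ?_⟩
    intro h0
    have hdvd : (M : ℤ) ∣ (k i - l i) := (ZMod.intCast_zmod_eq_zero_iff_dvd _ M).mp h0
    have hne : k i - l i ≠ 0 := sub_ne_zero.mpr hi
    have hle : (M : ℤ) ≤ |k i - l i| := Int.le_of_dvd (abs_pos.mpr hne) ((dvd_abs _ _).mpr hdvd)
    have habs : |k i - l i| ≤ 2 * ((T : ℤ) - 1) := by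
      rw [abs_le]
      constructor
      · have := hNI l hl k hk i
        linarith
      · exact hNI k hk l hl i
    have hcast : (2 * (T - 1) : ℕ) < M := hMgt
    have h5 : (2 * ((T : ℤ) - 1)) < (M : ℤ) := by omega
    linarith
  -- choose good generating vectors
  obtain ⟨w, hw⟩ := statement9_goodexists I T s hT hd (by omega) hs2 hMgt hsmall
  set z : Fin s → Fin d → ℤ := fun ℓ i => ((w ℓ i).val : ℤ) with hz
  have hzw : ∀ ℓ i, ((z ℓ i : ℤ) : ZMod M) = w ℓ i := by
    intro ℓ i
    simp only [hz, Int.cast_natCast]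
    rw [ZMod.natCast_val, ZMod.cast_id]
  have hgood : ∀ k ∈ I, ∃ ℓ : Fin s, ∀ l ∈ I, l ≠ k →
      ((∑ i, l i * z ℓ i - ∑ i, k i * z ℓ i : ℤ) : ZMod M) ≠ 0 := by
    intro k hk
    obtain ⟨ℓ, hℓ⟩ := hw k hk
    refine ⟨ℓ, ?_⟩
    intro l hl hlk hzero
    apply hℓ l hl hlk
    have hcast : ((∑ i, l i * z ℓ i - ∑ i, k i * z ℓ i : ℤ) : ZMod M)
        = - ∑ i, ((k i - l i : ℤ) : ZMod M) * w ℓ i := by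
      push_cast
      simp_rw [hzw]
      rw [← Finset.sum_neg_distrib, ← Finset.sum_sub_distrib]
      apply Finset.sum_congr rfl
      intro i _
      ring
    rw [hcast] at hzero
    exact neg_eq_zero.mp hzero
  refine ⟨s, M, z, by omega, hMp, hMgt, hMle, ?_, ?_, ?_, ?_⟩
  · intro ℓ i
    constructor
    · exact Int.ofNat_nonneg _
    · have := ZMod.val_lt (w ℓ i)
      simp only [hz]
      omega
  · rw [statement9_rankfull hMpos I z hgood, hT]
  · -- node count
    set f : Fin s × Fin M → (Fin d → ℝ) :=
      fun r => fun i => Int.fract (((r.2 : ℕ) : ℝ) / (M : ℝ) * (z r.1 i : ℝ)) with hf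
    have hcf : (Finset.univ.filter (fun r : Fin s × Fin M => r.2 ≠ 0)).card = s * (M - 1) := by
      have hprod : (Finset.univ.filter (fun r : Fin s × Fin M => r.2 ≠ 0))
          = (Finset.univ : Finset (Fin s)) ×ˢ (Finset.univ.filter (fun j : Fin M => j ≠ 0)) := by
        ext r
        simp [Finset.mem_product]
      rw [hprod, Finset.card_product, Finset.filter_ne',
        Finset.card_erase_of_mem (Finset.mem_univ _)]
      simp
    have hsub : Finset.image f Finset.univ ⊆ insert (fun _ : Fin d => (0 : ℝ))
        (Finset.image f (Finset.univ.filter (fun r : Fin s × Fin M => r.2 ≠ 0))) := by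
      intro x hx
      obtain ⟨r, _, rfl⟩ := Finset.mem_image.mp hx
      by_cases h0 : r.2 = 0
      · have hfr : f r = fun _ : Fin d => (0 : ℝ) := by
          funext i
          simp [hf, h0]
        rw [hfr]
        exact Finset.mem_insert_self _ _
      · exact Finset.mem_insert_of_mem
          (Finset.mem_image_of_mem f (Finset.mem_filter.mpr ⟨Finset.mem_univ _, h0⟩))
    calc (Finset.image f Finset.univ).card
        ≤ (insert (fun _ : Fin d => (0 : ℝ))
            (Finset.image f (Finset.univ.filter (fun r : Fin s × Fin M => r.2 ≠ 0)))).card :=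
          Finset.card_le_card hsub
      _ ≤ (Finset.image f (Finset.univ.filter (fun r : Fin s × Fin M => r.2 ≠ 0))).card + 1 :=
          Finset.card_insert_le _ _
      _ ≤ (Finset.univ.filter (fun r : Fin s × Fin M => r.2 ≠ 0)).card + 1 :=
          Nat.add_le_add_right Finset.card_image_le 1
      _ = 1 + s * (M - 1) := by rw [hcf]; omega
  · -- real inequality
    set L := Real.log T with hL
    have hT4' : (4 : ℝ) ≤ (T : ℝ) := by exact_mod_cast hT4
    have hlog2 : (0.6931 : ℝ) ≤ Real.log 2 := by
      have := Real.log_two_gt_d9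
      linarith
    have hL4 : Real.log 2 * 2 ≤ L := by
      rw [hL]
      calc Real.log 2 * 2 = Real.log (2 ^ 2) := by rw [Real.log_pow]; push_cast; ring
        _ ≤ Real.log T := Real.log_le_log (by norm_num) (by norm_num at hT4' ⊢; linarith)
    have hLlb : (1.3862 : ℝ) ≤ L := by linarith
    have hslog : (s : ℝ) * Real.log 2 ≤ L + Real.log 2 := by
      have h1 : (2 : ℝ) ^ (Nat.log 2 T) ≤ (T : ℝ) := by
        exact_mod_cast Nat.pow_log_le_self 2 (by omega : T ≠ 0)
      have h2 : (Nat.log 2 T : ℝ) * Real.log 2 ≤ L := by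
        rw [hL, ← Real.log_pow]
        exact Real.log_le_log (by positivity) h1
      rw [hsdef]
      push_cast
      linarith
    have hsle2 : (s : ℝ) ≤ 2.2 * L := by
      have hsnn : (0 : ℝ) ≤ (s : ℝ) := Nat.cast_nonneg s
      nlinarith [mul_le_mul_of_nonneg_left hlog2 hsnn]
    have hM1 : ((M : ℝ) - 1) ≤ 4 * (T : ℝ) := by
      have : (M : ℝ) ≤ 4 * (T : ℝ) := by
        have : M ≤ 4 * T := by omega
        exact_mod_cast this
      linarith
    have hM0' : (0 : ℝ) ≤ (M : ℝ) - 1 := by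
      have : (1 : ℝ) ≤ (M : ℝ) := by exact_mod_cast hMpos
      linarith
    have hprod : (s : ℝ) * ((M : ℝ) - 1) ≤ (2.2 * L) * (4 * (T : ℝ)) :=
      mul_le_mul hsle2 hM1 hM0' (by nlinarith)
    have hTL : (5.5 : ℝ) ≤ (T : ℝ) * L := by nlinarith
    linarith
end

section
/- Let c > 1 and δ ∈ (0,1) be real numbers, let T₁ ≥ 3 be an integer, and let N be a real number with 0 ≤ N ≤ c(T₁−1)/ln T₁. Let k ≥ 1 be an integer, let T_1 = T₁ ≥ T_2 ≥ … ≥ T_k ≥ 1 be integers, define s_j := ⌈(c/(c−1))² (ln T_j + ln T₁ − ln δ)/2⌉ for j = 1,…,k, and assume T_{j+1} ≤ (1 − 1/s_j) T_j for j = 1,…,k−1, as well as k ≤ ⌈s_1 ln T₁⌉. If M_1,…,M_k are positive reals with M_j ≤ 2·max{c(T_j − 1), N} for each j, then Σ_{j=1}^k M_j ≤ 2(2 s_1 + 1) c T₁ ≤ (2 (c/(c−1))² (2 ln T₁ − ln δ) + 6) c T₁. -/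
open scoped BigOperators

set_option maxHeartbeats 1000000 in
/-- deterministic node-count estimate behind Corollary 4.2: let `c > 1`,
`δ ∈ (0,1)`, `T₁ ≥ 3`, `0 ≤ N ≤ c(T₁-1)/ln T₁`, let `k ≥ 1`, let
`T_1 = T₁ ≥ T_2 ≥ … ≥ T_k ≥ 1` be integers with
`s_j = ⌈(c/(c-1))² (ln T_j + ln T₁ - ln δ)/2⌉`, `T_{j+1} ≤ (1 - 1/s_j) T_j` and
`k ≤ ⌈s_1 ln T₁⌉`. If `0 < M_j ≤ 2 max{c(T_j - 1), N}` for `j = 1,…,k`, then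
`Σ_{j=1}^k M_j ≤ 2(2 s_1 + 1) c T₁ ≤ (2 (c/(c-1))² (2 ln T₁ - ln δ) + 6) c T₁`. -/
theorem statement15 (c δ : ℝ) (hc : 1 < c) (hδ0 : 0 < δ) (hδ1 : δ < 1)
    (T1 : ℕ) (hT1 : 3 ≤ T1) (N : ℝ) (hN0 : 0 ≤ N)
    (hN : N ≤ c * ((T1 : ℝ) - 1) / Real.log T1)
    (k : ℕ) (hk : 1 ≤ k) (T : ℕ → ℕ) (hTinit : T 1 = T1)
    (hmono : ∀ j, 1 ≤ j → j < k → T (j + 1) ≤ T j)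
    (hpos : ∀ j, 1 ≤ j → j ≤ k → 1 ≤ T j)
    (s : ℕ → ℕ)
    (hsdef : ∀ j, s j =
      Nat.ceil ((c / (c - 1)) ^ 2 * (Real.log (T j) + Real.log T1 - Real.log δ) / 2))
    (hrec : ∀ j, 1 ≤ j → j < k → (T (j + 1) : ℝ) ≤ (1 - 1 / (s j : ℝ)) * T j)
    (hkbound : k ≤ Nat.ceil ((s 1 : ℝ) * Real.log T1))
    (M : ℕ → ℝ) (hMpos : ∀ j, 1 ≤ j → j ≤ k → 0 < M j)
    (hMle : ∀ j, 1 ≤ j → j ≤ k → M j ≤ 2 * max (c * ((T j : ℝ) - 1)) N) :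
    (∑ j ∈ Finset.Icc 1 k, M j) ≤ 2 * (2 * (s 1 : ℝ) + 1) * c * T1
    ∧ 2 * (2 * (s 1 : ℝ) + 1) * c * T1
        ≤ (2 * (c / (c - 1)) ^ 2 * (2 * Real.log T1 - Real.log δ) + 6) * c * T1 := by
  have hc0 : (0:ℝ) < c := lt_trans one_pos hc
  have hc1 : (0:ℝ) < c - 1 := sub_pos.mpr hc
  have hApos : (0:ℝ) < (c / (c - 1)) ^ 2 := by positivity
  have hT1R : (3:ℝ) ≤ (T1:ℝ) := by exact_mod_cast hT1
  have hT1pos : (0:ℝ) < (T1:ℝ) := by linarith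
  have hL1 : 1 < Real.log T1 := by
    have h3 : Real.log 3 ≤ Real.log T1 := Real.log_le_log (by norm_num) hT1R
    have he : 1 < Real.log 3 := by
      rw [show (1:ℝ) = Real.log (Real.exp 1) by simp]
      exact Real.log_lt_log (Real.exp_pos 1) (by linarith [Real.exp_one_lt_d9])
    linarith
  have hL0 : 0 < Real.log T1 := by linarith
  have hlogδ : Real.log δ < 0 := Real.log_neg hδ0 hδ1
  -- T j ≤ T1 on [1,k]
  have hTle : ∀ j, 1 ≤ j → j ≤ k → T j ≤ T1 := by
    intro j h1 hjk
    induction j with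
    | zero => omega
    | succ n ih =>
      rcases Nat.eq_or_lt_of_le h1 with h | h
      · have hn0 : n = 0 := by omega
        subst hn0
        simp [hTinit]
      · have hn1 : 1 ≤ n := by omega
        exact le_trans (hmono n hn1 (by omega)) (ih hn1 (by omega))
  -- s j ≥ 1 on [1,k]
  have hspos : ∀ j, 1 ≤ j → j ≤ k → 1 ≤ s j := by
    intro j h1 hjk
    have hTj : (1:ℝ) ≤ (T j : ℝ) := by exact_mod_cast hpos j h1 hjk
    have hlogTj : 0 ≤ Real.log (T j) := Real.log_nonneg hTj
    rw [hsdef j]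
    apply Nat.one_le_ceil_iff.mpr
    have harg : 0 < Real.log (T j) + Real.log T1 - Real.log δ := by linarith
    positivity
  have hs1pos : 1 ≤ s 1 := hspos 1 le_rfl hk
  have hs1R : (1:ℝ) ≤ (s 1 : ℝ) := by exact_mod_cast hs1pos
  -- s j ≤ s 1 on [1,k]
  have hsle : ∀ j, 1 ≤ j → j ≤ k → s j ≤ s 1 := by
    intro j h1 hjk
    have hTj : (0:ℝ) < (T j : ℝ) := by
      exact_mod_cast Nat.lt_of_lt_of_le Nat.zero_lt_one (hpos j h1 hjk)
    have hlog : Real.log (T j) ≤ Real.log T1 := by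
      apply Real.log_le_log hTj
      exact_mod_cast hTle j h1 hjk
    rw [hsdef j, hsdef 1, hTinit]
    apply Nat.ceil_le_ceil
    have h2 := mul_le_mul_of_nonneg_left
      (by linarith : Real.log (T j) + Real.log T1 - Real.log δ
        ≤ Real.log T1 + Real.log T1 - Real.log δ) (le_of_lt hApos)
    linarith
  -- geometric decay
  set r : ℝ := 1 - 1 / (s 1 : ℝ) with hr
  have hr0 : 0 ≤ r := by
    have : 1 / (s 1 : ℝ) ≤ 1 := by
      rw [div_le_one (by linarith)]; exact hs1R
    simpa [hr] using this
  have hr1 : r < 1 := by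
    have : 0 < 1 / (s 1 : ℝ) := by positivity
    simp only [hr]; linarith
  have hTgeo : ∀ j, 1 ≤ j → j ≤ k → (T j : ℝ) ≤ r ^ (j - 1) * T1 := by
    intro j h1 hjk
    induction j with
    | zero => omega
    | succ n ih =>
      rcases Nat.eq_or_lt_of_le h1 with h | h
      · have : n = 0 := by omega
        subst this
        simp [hTinit]
      · have hn1 : 1 ≤ n := by omega
        have hnk : n < k := by omega
        have hsn : 1 ≤ s n := hspos n hn1 (le_of_lt hnk)
        have hsnR : (1:ℝ) ≤ (s n : ℝ) := by exact_mod_cast hsn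
        have hsle' : (s n : ℝ) ≤ (s 1 : ℝ) := by
          exact_mod_cast hsle n hn1 (le_of_lt hnk)
        have hfac : (1 - 1 / (s n : ℝ)) ≤ r := by
          simp only [hr]
          have : 1 / (s 1 : ℝ) ≤ 1 / (s n : ℝ) :=
            one_div_le_one_div_of_le (by linarith) hsle'
          linarith
        have hTn0 : (0:ℝ) ≤ (T n : ℝ) := Nat.cast_nonneg _
        calc (T (n+1) : ℝ) ≤ (1 - 1 / (s n : ℝ)) * T n := hrec n hn1 hnk
          _ ≤ r * (T n : ℝ) := by
              apply mul_le_mul_of_nonneg_right hfac hTn0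
          _ ≤ r * (r ^ (n - 1) * T1) := by
              apply mul_le_mul_of_nonneg_left (ih hn1 (le_of_lt hnk)) hr0
          _ = r ^ (n + 1 - 1) * T1 := by
              rw [← mul_assoc, ← pow_succ']
              congr 2
              omega
  -- geometric sum bound
  have hgeom : ∑ j ∈ Finset.Icc 1 k, r ^ (j - 1) ≤ (s 1 : ℝ) := by
    have h1 : ∑ j ∈ Finset.Icc 1 k, r ^ (j - 1) = ∑ i ∈ Finset.range k, r ^ i := by
      rw [← Finset.Ico_add_one_right_eq_Icc, Finset.sum_Ico_eq_sum_range]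
      simp
    rw [h1]
    have hrne : r ≠ 1 := ne_of_lt hr1
    rw [geom_sum_eq hrne]
    have hrn : 0 ≤ r ^ k := pow_nonneg hr0 k
    have h1r : 0 < 1 - r := by linarith
    rw [div_le_iff_of_neg (by linarith : r - 1 < 0)]
    have hs1r : (s 1 : ℝ) * (r - 1) = -1 := by
      rw [hr, show (1:ℝ) - 1 / (s 1 : ℝ) - 1 = -(1 / (s 1 : ℝ)) by ring, mul_neg,
        mul_one_div_cancel (by linarith)]
    rw [hs1r]
    linarith
  -- sum of T j
  have hsumT : ∑ j ∈ Finset.Icc 1 k, (T j : ℝ) ≤ (s 1 : ℝ) * T1 := by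
    calc ∑ j ∈ Finset.Icc 1 k, (T j : ℝ)
        ≤ ∑ j ∈ Finset.Icc 1 k, r ^ (j - 1) * T1 := by
          apply Finset.sum_le_sum
          intro j hj
          rw [Finset.mem_Icc] at hj
          exact hTgeo j hj.1 hj.2
      _ = (∑ j ∈ Finset.Icc 1 k, r ^ (j - 1)) * T1 := by
          rw [Finset.sum_mul]
      _ ≤ (s 1 : ℝ) * T1 := by
          apply mul_le_mul_of_nonneg_right hgeom (le_of_lt hT1pos)
  -- bound on k * N
  have hkN : (k : ℝ) * N ≤ (s 1 : ℝ) * c * T1 + c * T1 := by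
    have hk1 : (k : ℝ) ≤ (s 1 : ℝ) * Real.log T1 + 1 := by
      have h1 : (k : ℝ) ≤ (Nat.ceil ((s 1 : ℝ) * Real.log T1) : ℝ) := by
        exact_mod_cast hkbound
      have h2 : (Nat.ceil ((s 1 : ℝ) * Real.log T1) : ℝ) < (s 1 : ℝ) * Real.log T1 + 1 :=
        Nat.ceil_lt_add_one (by positivity)
      linarith
    have hNle : N ≤ c * ((T1 : ℝ) - 1) / Real.log T1 := hN
    have hstep : (k : ℝ) * N ≤ ((s 1 : ℝ) * Real.log T1 + 1) * (c * ((T1 : ℝ) - 1) / Real.log T1) := by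
      apply mul_le_mul hk1 hNle hN0 (by positivity)
    have hexp : ((s 1 : ℝ) * Real.log T1 + 1) * (c * ((T1 : ℝ) - 1) / Real.log T1)
        = (s 1 : ℝ) * (c * ((T1:ℝ) - 1)) + c * ((T1:ℝ) - 1) / Real.log T1 := by
      field_simp
    rw [hexp] at hstep
    have hb1 : (s 1 : ℝ) * (c * ((T1:ℝ) - 1)) ≤ (s 1 : ℝ) * c * T1 := by
      rw [mul_assoc]
      apply mul_le_mul_of_nonneg_left ?_ (by positivity)
      apply mul_le_mul_of_nonneg_left (by linarith) (le_of_lt hc0)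
    have hb2 : c * ((T1:ℝ) - 1) / Real.log T1 ≤ c * T1 := by
      have : c * ((T1:ℝ) - 1) / Real.log T1 ≤ c * ((T1:ℝ) - 1) :=
        div_le_self (by nlinarith) (le_of_lt hL1)
      nlinarith
    linarith
  constructor
  · -- main bound
    have hstep : ∑ j ∈ Finset.Icc 1 k, M j
        ≤ ∑ j ∈ Finset.Icc 1 k, (2 * (c * ((T j : ℝ) - 1)) + 2 * N) := by
      apply Finset.sum_le_sum
      intro j hj
      rw [Finset.mem_Icc] at hj
      have h1 := hMle j hj.1 hj.2
      have hTj : (1:ℝ) ≤ (T j : ℝ) := by exact_mod_cast hpos j hj.1 hj.2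
      have hcT : 0 ≤ c * ((T j : ℝ) - 1) := by nlinarith
      have hmax : max (c * ((T j : ℝ) - 1)) N ≤ c * ((T j : ℝ) - 1) + N :=
        max_le (by linarith) (by linarith)
      calc M j ≤ 2 * max (c * ((T j : ℝ) - 1)) N := h1
        _ ≤ 2 * (c * ((T j : ℝ) - 1)) + 2 * N := by linarith
    have hcard : (Finset.Icc 1 k).card = k := by
      rw [Nat.card_Icc]; omega
    have hsplit : ∑ j ∈ Finset.Icc 1 k, (2 * (c * ((T j : ℝ) - 1)) + 2 * N)
        = 2 * c * (∑ j ∈ Finset.Icc 1 k, ((T j : ℝ) - 1)) + 2 * k * N := by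
      simp only [← mul_assoc]
      rw [Finset.sum_add_distrib, Finset.sum_const, hcard, nsmul_eq_mul, ← Finset.mul_sum]
      ring
    have hsumT' : ∑ j ∈ Finset.Icc 1 k, ((T j : ℝ) - 1) ≤ (s 1 : ℝ) * T1 := by
      have : ∑ j ∈ Finset.Icc 1 k, ((T j : ℝ) - 1) ≤ ∑ j ∈ Finset.Icc 1 k, (T j : ℝ) := by
        apply Finset.sum_le_sum; intro j _; linarith
      linarith
    calc ∑ j ∈ Finset.Icc 1 k, M j
        ≤ 2 * c * (∑ j ∈ Finset.Icc 1 k, ((T j : ℝ) - 1)) + 2 * k * N := by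
          rw [← hsplit]; exact hstep
      _ ≤ 2 * c * ((s 1 : ℝ) * T1) + 2 * ((s 1 : ℝ) * c * T1 + c * T1) := by
          have h1 : 2 * c * (∑ j ∈ Finset.Icc 1 k, ((T j : ℝ) - 1)) ≤ 2 * c * ((s 1 : ℝ) * T1) :=
            mul_le_mul_of_nonneg_left hsumT' (by positivity)
          have h2 : 2 * ((k:ℝ) * N) ≤ 2 * ((s 1 : ℝ) * c * T1 + c * T1) := by linarith
          have : 2 * (k:ℝ) * N = 2 * ((k:ℝ) * N) := by ring
          linarith [this ▸ h2]
      _ = 2 * (2 * (s 1 : ℝ) + 1) * c * T1 := by ring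
  · -- second inequality
    have hceil : (s 1 : ℝ) ≤ (c / (c - 1)) ^ 2 * (2 * Real.log T1 - Real.log δ) / 2 + 1 := by
      rw [hsdef 1, hTinit]
      have hx : (0:ℝ) < Real.log T1 + Real.log T1 - Real.log δ := by linarith
      have harg : (0:ℝ) ≤ (c / (c - 1)) ^ 2 * (Real.log T1 + Real.log T1 - Real.log δ) / 2 := by
        positivity
      have := Nat.ceil_lt_add_one harg
      have heq : (c / (c - 1)) ^ 2 * (Real.log T1 + Real.log T1 - Real.log δ) / 2
          = (c / (c - 1)) ^ 2 * (2 * Real.log T1 - Real.log δ) / 2 := by ring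
      linarith [heq ▸ this]
    have hcT : 0 < c * (T1:ℝ) := by positivity
    nlinarith [mul_pos hc0 hT1pos, mul_le_mul_of_nonneg_right hceil (le_of_lt hcT)]
end

section
/- Let d ≥ 1 and fix h ∈ ℤ^{d−1}. Let I = {k_1,…,k_6} ⊂ ℤ^d consist of the six vectors whose first components are 0, 2, 5, 7, 16, 21 respectively and whose remaining d−1 components all equal h. Let z_1, z_2, z_3 ∈ ℤ^d be any vectors whose first component equals 1, and set M_1 = 2, M_2 = 3, M_3 = 5. Then: (i) for each ℓ ∈ {1,2,3}, every frequency of I aliases to another frequency of I with respect to Λ(z_ℓ, M_ℓ), i.e. for every k ∈ I there exists h' ∈ I∖{k} with k·z_ℓ ≡ h'·z_ℓ (mod M_ℓ) (equivalently, the set I^u_{mod M_ℓ} of uniquely mapped residues is empty); and nevertheless (ii) the Fourier matrix A(Λ(z_1,2, z_2,3, z_3,5), I) has full column rank 6. -/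
open scoped BigOperators

open Matrix



lemma sumExp (Mv : ℕ) (hMv : 0 < Mv) (m : ℤ) :
    ∑ j : Fin Mv, Complex.exp (2 * Real.pi * Complex.I * (((j : ℕ) : ℂ) / (Mv : ℂ)) * (m : ℂ))
      = if (Mv : ℤ) ∣ m then (Mv : ℂ) else 0 := by
  have hM0 : (Mv : ℂ) ≠ 0 := Nat.cast_ne_zero.2 hMv.ne'
  set ζ : ℂ := Complex.exp (2 * Real.pi * Complex.I * ((m : ℂ) / (Mv : ℂ))) with hζ
  have hterm : ∀ j : Fin Mv,
      Complex.exp (2 * Real.pi * Complex.I * (((j : ℕ) : ℂ) / (Mv : ℂ)) * (m : ℂ))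
        = ζ ^ (j : ℕ) := by
    intro j
    rw [hζ, ← Complex.exp_nat_mul]
    congr 1
    ring
  rw [Finset.sum_congr rfl fun j _ => hterm j]
  by_cases hdvd : (Mv : ℤ) ∣ m
  · obtain ⟨c, rfl⟩ := hdvd
    have hζ1 : ζ = 1 := by
      rw [hζ, show 2 * (Real.pi : ℂ) * Complex.I * ((((Mv : ℤ) * c : ℤ) : ℂ) / (Mv : ℂ))
          = (c : ℂ) * (2 * (Real.pi : ℂ) * Complex.I) from by push_cast; field_simp]
      exact Complex.exp_int_mul_two_pi_mul_I c
    rw [if_pos ⟨c, rfl⟩]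
    simp [hζ1]
  · rw [if_neg hdvd]
    have hζM : ζ ^ Mv = 1 := by
      rw [hζ, ← Complex.exp_nat_mul, show (Mv : ℂ) * (2 * (Real.pi : ℂ) * Complex.I * ((m : ℂ) / (Mv : ℂ)))
          = (m : ℂ) * (2 * (Real.pi : ℂ) * Complex.I) from by field_simp]
      exact Complex.exp_int_mul_two_pi_mul_I m
    have hζne : ζ ≠ 1 := by
      intro hone
      rw [hζ, Complex.exp_eq_one_iff] at hone
      obtain ⟨n, hn⟩ := hone
      apply hdvd
      have h2 : (2 : ℂ) * (Real.pi : ℂ) * Complex.I ≠ 0 := by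
        simp [Real.pi_ne_zero, Complex.I_ne_zero]
      have hmn : (m : ℂ) = (n : ℂ) * (Mv : ℂ) := by
        have : 2 * (Real.pi : ℂ) * Complex.I * ((m : ℂ) / (Mv : ℂ))
            = 2 * (Real.pi : ℂ) * Complex.I * (n : ℂ) := by rw [hn]; ring
        have h3 := mul_left_cancel₀ h2 this
        field_simp at h3
        linear_combination h3
      have : m = n * (Mv : ℤ) := by exact_mod_cast hmn
      exact ⟨n, by rw [this, mul_comm]⟩
    rw [Fin.sum_univ_eq_sum_range (fun j => ζ ^ j) Mv, geom_sum_eq hζne, hζM]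
    simp

lemma classSum (Mv : ℕ) (hMv : 0 < Mv) (g : Fin 6 → ℂ) (a : Fin 6 → ℤ) (Cv b : ℤ)
    (hrow : ∀ j : Fin Mv, ∑ t : Fin 6, g t *
      Complex.exp (2 * Real.pi * Complex.I * (((j : ℕ) : ℂ) / (Mv : ℂ)) * ((a t + Cv : ℤ) : ℂ)) = 0) :
    ∑ t : Fin 6, (if (Mv : ℤ) ∣ (a t - b) then (Mv : ℂ) else 0) * g t = 0 := by
  have key : ∀ t : Fin 6,
      ∑ j : Fin Mv, Complex.exp (2 * Real.pi * Complex.I * (((j : ℕ) : ℂ) / (Mv : ℂ)) * ((-(b + Cv) : ℤ) : ℂ)) *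
        (g t * Complex.exp (2 * Real.pi * Complex.I * (((j : ℕ) : ℂ) / (Mv : ℂ)) * ((a t + Cv : ℤ) : ℂ)))
      = (if (Mv : ℤ) ∣ (a t - b) then (Mv : ℂ) else 0) * g t := by
    intro t
    have h1 : ∀ j : Fin Mv,
        Complex.exp (2 * Real.pi * Complex.I * (((j : ℕ) : ℂ) / (Mv : ℂ)) * ((-(b + Cv) : ℤ) : ℂ)) *
          (g t * Complex.exp (2 * Real.pi * Complex.I * (((j : ℕ) : ℂ) / (Mv : ℂ)) * ((a t + Cv : ℤ) : ℂ)))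
        = g t * Complex.exp (2 * Real.pi * Complex.I * (((j : ℕ) : ℂ) / (Mv : ℂ)) * ((a t - b : ℤ) : ℂ)) := by
      intro j
      rw [mul_left_comm, ← Complex.exp_add]
      congr 2
      push_cast
      ring
    rw [Finset.sum_congr rfl fun j _ => h1 j, ← Finset.mul_sum, sumExp Mv hMv (a t - b), mul_comm]
  calc ∑ t : Fin 6, (if (Mv : ℤ) ∣ (a t - b) then (Mv : ℂ) else 0) * g t
      = ∑ t : Fin 6, ∑ j : Fin Mv,
          Complex.exp (2 * Real.pi * Complex.I * (((j : ℕ) : ℂ) / (Mv : ℂ)) * ((-(b + Cv) : ℤ) : ℂ)) *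
          (g t * Complex.exp (2 * Real.pi * Complex.I * (((j : ℕ) : ℂ) / (Mv : ℂ)) * ((a t + Cv : ℤ) : ℂ))) :=
        Finset.sum_congr rfl fun t _ => (key t).symm
    _ = ∑ j : Fin Mv, ∑ t : Fin 6,
          Complex.exp (2 * Real.pi * Complex.I * (((j : ℕ) : ℂ) / (Mv : ℂ)) * ((-(b + Cv) : ℤ) : ℂ)) *
          (g t * Complex.exp (2 * Real.pi * Complex.I * (((j : ℕ) : ℂ) / (Mv : ℂ)) * ((a t + Cv : ℤ) : ℂ))) :=
        Finset.sum_comm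
    _ = ∑ j : Fin Mv,
          Complex.exp (2 * Real.pi * Complex.I * (((j : ℕ) : ℂ) / (Mv : ℂ)) * ((-(b + Cv) : ℤ) : ℂ)) *
          ∑ t : Fin 6, g t * Complex.exp (2 * Real.pi * Complex.I * (((j : ℕ) : ℂ) / (Mv : ℂ)) * ((a t + Cv : ℤ) : ℂ)) :=
        Finset.sum_congr rfl fun j _ => (Finset.mul_sum _ _ _).symm
    _ = 0 := Finset.sum_eq_zero fun j _ => by rw [hrow j, mul_zero]

lemma dotCons {d' : ℕ} (h : Fin d' → ℤ) (w : Fin (d' + 1) → ℤ) (hw : w 0 = 1) (a : ℤ) :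
    ∑ i, (Fin.cons a h : Fin (d' + 1) → ℤ) i * w i = a + ∑ i : Fin d', h i * w i.succ := by
  rw [Fin.sum_univ_succ]
  simp [hw]

lemma part1aux {d' : ℕ} (h : Fin d' → ℤ) (I : Finset (Fin (d' + 1) → ℤ))
    (w : Fin (d' + 1) → ℤ) (hw : w 0 = 1) (m a a' : ℤ)
    (hmem : Fin.cons a' h ∈ I) (hne : a' ≠ a) (hmod : a % m = a' % m) :
    ∃ h' ∈ I, h' ≠ (Fin.cons a h : Fin (d' + 1) → ℤ) ∧
      (∑ i, (Fin.cons a h : Fin (d' + 1) → ℤ) i * w i) % m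
        = (∑ i, h' i * w i) % m := by
  refine ⟨Fin.cons a' h, hmem, ?_, ?_⟩
  · intro he
    exact hne (by simpa using congrFun he 0)
  · rw [dotCons h w hw, dotCons h w hw]
    exact Int.ModEq.add_right _ hmod

/-- Example 5.1: in dimension `d = d' + 1 ≥ 1`, let `I` consist of the six
vectors with first components `0, 2, 5, 7, 16, 21` and common remaining components `h`, let
`z_1, z_2, z_3` have first component `1`, and let `M_1 = 2`, `M_2 = 3`, `M_3 = 5`. Then
(i) for each `ℓ`, every frequency of `I` aliases to another frequency of `I` with respect to
`Λ(z_ℓ, M_ℓ)`, yet (ii) the Fourier matrix of the multiple rank-1 lattice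
`Λ(z_1,2, z_2,3, z_3,5)` has full column rank `6`. -/
theorem statement17 (d' : ℕ) (h : Fin d' → ℤ)
    (z : Fin 3 → Fin (d' + 1) → ℤ) (hz : ∀ ℓ, z ℓ 0 = 1)
    (M : Fin 3 → ℕ) (hM : M = ![2, 3, 5])
    (I : Finset (Fin (d' + 1) → ℤ))
    (hI : I = {Fin.cons 0 h, Fin.cons 2 h, Fin.cons 5 h, Fin.cons 7 h,
               Fin.cons 16 h, Fin.cons 21 h}) :
    (∀ ℓ : Fin 3, ∀ k ∈ I, ∃ h' ∈ I, h' ≠ k ∧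
        (∑ i, k i * z ℓ i) % (M ℓ : ℤ) = (∑ i, h' i * z ℓ i) % (M ℓ : ℤ))
    ∧ (multiFourier z M I).rank = 6 := by
  subst hM hI
  refine ⟨?_, ?_⟩
  · intro ℓ k hk
    simp only [Finset.mem_insert, Finset.mem_singleton] at hk
    fin_cases ℓ <;>
      rcases hk with rfl | rfl | rfl | rfl | rfl | rfl
    · exact part1aux h _ (z _) (hz _) _ _ 2 (by simp) (by norm_num) (by decide)
    · exact part1aux h _ (z _) (hz _) _ _ 0 (by simp) (by norm_num) (by decide)
    · exact part1aux h _ (z _) (hz _) _ _ 7 (by simp) (by norm_num) (by decide)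
    · exact part1aux h _ (z _) (hz _) _ _ 5 (by simp) (by norm_num) (by decide)
    · exact part1aux h _ (z _) (hz _) _ _ 0 (by simp) (by norm_num) (by decide)
    · exact part1aux h _ (z _) (hz _) _ _ 5 (by simp) (by norm_num) (by decide)
    · exact part1aux h _ (z _) (hz _) _ _ 21 (by simp) (by norm_num) (by decide)
    · exact part1aux h _ (z _) (hz _) _ _ 5 (by simp) (by norm_num) (by decide)
    · exact part1aux h _ (z _) (hz _) _ _ 2 (by simp) (by norm_num) (by decide)
    · exact part1aux h _ (z _) (hz _) _ _ 16 (by simp) (by norm_num) (by decide)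
    · exact part1aux h _ (z _) (hz _) _ _ 7 (by simp) (by norm_num) (by decide)
    · exact part1aux h _ (z _) (hz _) _ _ 0 (by simp) (by norm_num) (by decide)
    · exact part1aux h _ (z _) (hz _) _ _ 5 (by simp) (by norm_num) (by decide)
    · exact part1aux h _ (z _) (hz _) _ _ 7 (by simp) (by norm_num) (by decide)
    · exact part1aux h _ (z _) (hz _) _ _ 0 (by simp) (by norm_num) (by decide)
    · exact part1aux h _ (z _) (hz _) _ _ 2 (by simp) (by norm_num) (by decide)
    · exact part1aux h _ (z _) (hz _) _ _ 21 (by simp) (by norm_num) (by decide)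
    · exact part1aux h _ (z _) (hz _) _ _ 16 (by simp) (by norm_num) (by decide)
  · set av : Fin 6 → ℤ := ![0, 2, 5, 7, 16, 21] with hav
    have av0 : av 0 = 0 := rfl
    have av1 : av 1 = 2 := rfl
    have av2 : av 2 = 5 := rfl
    have av3 : av 3 = 7 := rfl
    have av4 : av 4 = 16 := rfl
    have av5 : av 5 = 21 := rfl
    have avinj : ∀ s t : Fin 6, av s = av t → s = t := by
      rw [hav]; decide
    have hconsinj : ∀ a b : ℤ, (Fin.cons a h : Fin (d' + 1) → ℤ) = Fin.cons b h → a = b := by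
      intro a b hab
      simpa using congrFun hab 0
    set I : Finset (Fin (d' + 1) → ℤ) :=
      {Fin.cons 0 h, Fin.cons 2 h, Fin.cons 5 h, Fin.cons 7 h, Fin.cons 16 h, Fin.cons 21 h}
      with hIdef
    have hmem : ∀ t : Fin 6, (Fin.cons (av t) h : Fin (d' + 1) → ℤ) ∈ I := by
      intro t
      fin_cases t <;>
        simp only [av0, av1, av2, av3, av4, av5, hIdef, Finset.mem_insert, Finset.mem_singleton] <;>
        tauto
    set f : Fin 6 → {k // k ∈ I} := fun t => ⟨Fin.cons (av t) h, hmem t⟩ with hf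
    have hbij : Function.Bijective f := by
      constructor
      · intro s t hst
        exact avinj s t (hconsinj _ _ (congrArg Subtype.val hst))
      · rintro ⟨k, hk⟩
        simp only [hIdef, Finset.mem_insert, Finset.mem_singleton] at hk
        rcases hk with rfl | rfl | rfl | rfl | rfl | rfl
        · exact ⟨0, Subtype.ext (show (Fin.cons (av 0) h : Fin (d' + 1) → ℤ) = _ by rw [av0])⟩
        · exact ⟨1, Subtype.ext (show (Fin.cons (av 1) h : Fin (d' + 1) → ℤ) = _ by rw [av1])⟩
        · exact ⟨2, Subtype.ext (show (Fin.cons (av 2) h : Fin (d' + 1) → ℤ) = _ by rw [av2])⟩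
        · exact ⟨3, Subtype.ext (show (Fin.cons (av 3) h : Fin (d' + 1) → ℤ) = _ by rw [av3])⟩
        · exact ⟨4, Subtype.ext (show (Fin.cons (av 4) h : Fin (d' + 1) → ℤ) = _ by rw [av4])⟩
        · exact ⟨5, Subtype.ext (show (Fin.cons (av 5) h : Fin (d' + 1) → ℤ) = _ by rw [av5])⟩
    set e : Fin 6 ≃ {k // k ∈ I} := Equiv.ofBijective f hbij with he
    have hLI : LinearIndependent ℂ ((multiFourier z ![2,3,5] I)ᵀ ∘ ⇑e) := by
      rw [Fintype.linearIndependent_iff]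
      intro g hg
      have hrow : ∀ (ℓ : Fin 3) (j : Fin (![2,3,5] ℓ)),
          ∑ t : Fin 6, g t * Complex.exp (2 * Real.pi * Complex.I *
            (((j : ℕ) : ℂ) / ((![2,3,5] ℓ : ℕ) : ℂ)) *
            ((av t + ∑ i : Fin d', h i * z ℓ i.succ : ℤ) : ℂ)) = 0 := by
        intro ℓ j
        have h1 := congrFun hg ⟨ℓ, j⟩
        simp only [Finset.sum_apply, Pi.smul_apply, Pi.zero_apply, smul_eq_mul,
          Function.comp_apply, Matrix.transpose_apply] at h1
        have h3 : ∀ t : Fin 6, multiFourier z ![2,3,5] I ⟨ℓ, j⟩ (e t)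
            = Complex.exp (2 * Real.pi * Complex.I *
              (((j : ℕ) : ℂ) / ((![2,3,5] ℓ : ℕ) : ℂ)) *
              ((av t + ∑ i : Fin d', h i * z ℓ i.succ : ℤ) : ℂ)) := by
          intro t
          have hcoe : ((e t : {k // k ∈ I}) : Fin (d' + 1) → ℤ) = Fin.cons (av t) h := rfl
          simp only [multiFourier, hcoe]
          rw [dotCons h (z ℓ) (hz ℓ)]
        rw [← h1]
        exact Finset.sum_congr rfl fun t _ => by show _ = g t * multiFourier z ![2,3,5] I ⟨ℓ, j⟩ (e t); rw [h3 t]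
      have E1 := classSum 2 (by norm_num) g av (∑ i : Fin d', h i * z 0 i.succ) 0
        (fun j => hrow 0 j)
      have E3 := classSum 3 (by norm_num) g av (∑ i : Fin d', h i * z 1 i.succ) 2
        (fun j => hrow 1 j)
      have E4 := classSum 3 (by norm_num) g av (∑ i : Fin d', h i * z 1 i.succ) 1
        (fun j => hrow 1 j)
      have E5 := classSum 5 (by norm_num) g av (∑ i : Fin d', h i * z 2 i.succ) 0
        (fun j => hrow 2 j)
      have E6 := classSum 5 (by norm_num) g av (∑ i : Fin d', h i * z 2 i.succ) 2
        (fun j => hrow 2 j)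
      have E7 := classSum 5 (by norm_num) g av (∑ i : Fin d', h i * z 2 i.succ) 1
        (fun j => hrow 2 j)
      rw [Fin.sum_univ_six] at E1 E3 E4 E5 E6 E7
      rw [av0, av1, av2, av3, av4, av5] at E1 E3 E4 E5 E6 E7
      norm_num at E1 E3 E4 E5 E6 E7
      have h2' : g 2 = -g 0 := by linear_combination ((1:ℂ)/5) * E5
      have h1' : g 1 = g 0 := by linear_combination ((1:ℂ)/3) * E3 - h2'
      have h3' : g 3 = -g 0 := by linear_combination ((1:ℂ)/5) * E6 - h1'
      have h4' : g 4 = g 0 := by linear_combination ((1:ℂ)/3) * E4 - h3'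
      have h5' : g 5 = -g 0 := by linear_combination ((1:ℂ)/5) * E7 - h4'
      have h0' : g 0 = 0 := by linear_combination ((1:ℂ)/6) * E1 - ((1:ℂ)/3) * h1' - ((1:ℂ)/3) * h4'
      have hg1 : g 1 = 0 := by rw [h1', h0']
      have hg2 : g 2 = 0 := by rw [h2', h0', neg_zero]
      have hg3 : g 3 = 0 := by rw [h3', h0', neg_zero]
      have hg4 : g 4 = 0 := by rw [h4', h0']
      have hg5 : g 5 = 0 := by rw [h5', h0', neg_zero]
      intro t
      fin_cases t
      · exact h0'
      · exact hg1
      · exact hg2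
      · exact hg3
      · exact hg4
      · exact hg5
    have hLI2 : LinearIndependent ℂ (multiFourier z ![2,3,5] I)ᵀ :=
      (linearIndependent_equiv e).mp hLI
    rw [Matrix.rank_eq_finrank_span_cols, finrank_span_eq_card (show LinearIndependent ℂ (multiFourier z ![2,3,5] I).col from hLI2), Fintype.card_coe]
    have himg : I = Finset.image (fun a : ℤ => (Fin.cons a h : Fin (d' + 1) → ℤ))
        ({0, 2, 5, 7, 16, 21} : Finset ℤ) := by
      simp [hIdef, Finset.image_insert]
    rw [himg, Finset.card_image_of_injective _ (fun a b hab => hconsinj a b hab)]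
    decide
end
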